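/- arXiv:1911.02672 — 6 statements merged into one kernel-verified Lean document; each statement's English description precedes it below -/
import Mathlib

section
/- Let G = K_n − M be the complete graph on n vertices with a perfect or partial matching M removed, and let L be a list-assignment for G such that (1) for every edge ab ∈ M, |L(a)|, |L(b)| ≥ |M| and |L(a)| + |L(b)| ≥ n, and (2) for every vertex v not covered by M, |L(v)| ≥ n − |M|. Then G is L-colorable. -/
open SimpleGraph Finset

lemma mem_edge_aux {V : Type} {M : SimpleGraph V} {e : Sym2 V} (he : e ∈ M.edgeSet)
    {x : V} (hx : x ∈ e) : ∃ y, M.Adj x y ∧ e = s(x, y) := by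
  induction e with
  | _ u w =>
    rw [SimpleGraph.mem_edgeSet] at he
    rcases Sym2.mem_iff.mp hx with rfl | rfl
    · exact ⟨w, he, rfl⟩
    · exact ⟨u, he.symm, Sym2.eq_swap⟩

lemma hall_case {V : Type} [Fintype V] [DecidableEq V]
    (M : SimpleGraph V) [DecidableRel M.Adj]
    (hmatch : ∀ a b c, M.Adj a b → M.Adj a c → b = c)
    (L : V → Finset ℕ)
    (hM : ∀ a b, M.Adj a b → M.edgeFinset.card ≤ (L a).card ∧
      Fintype.card V ≤ (L a).card + (L b).card)
    (huncov : ∀ v, v ∉ M.support → Fintype.card V - M.edgeFinset.card ≤ (L v).card)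
    (hdisj : ∀ a b, M.Adj a b → Disjoint (L a) (L b)) :
    ∃ φ : V → ℕ, Function.Injective φ ∧ ∀ v, φ v ∈ L v := by
  have := (Finset.all_card_le_biUnion_card_iff_exists_injective L).mp ?_
  · obtain ⟨f, hf, hmem⟩ := this; exact ⟨f, hf, hmem⟩
  intro s
  by_cases hedge : ∃ a ∈ s, ∃ b ∈ s, M.Adj a b
  · obtain ⟨a, ha, b, hb, hab⟩ := hedge
    have hsub : L a ∪ L b ⊆ s.biUnion L := by
      apply Finset.union_subset
      · exact Finset.subset_biUnion_of_mem L ha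
      · exact Finset.subset_biUnion_of_mem L hb
    calc s.card ≤ Fintype.card V := Finset.card_le_univ s
    _ ≤ (L a).card + (L b).card := (hM a b hab).2
    _ = (L a ∪ L b).card := (Finset.card_union_of_disjoint (hdisj a b hab)).symm
    _ ≤ (s.biUnion L).card := Finset.card_le_card hsub
  · push_neg at hedge
    rcases s.eq_empty_or_nonempty with rfl | ⟨v₀, hv₀⟩
    · simp
    by_cases hcov : ∀ v ∈ s, v ∈ M.support
    · classical
      set p : V → V := fun v => if h : ∃ w, M.Adj v w then Classical.choose h else v with hp
      have hadj : ∀ v ∈ s, M.Adj v (p v) := by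
        intro v hv
        have h := (M.mem_support).mp (hcov v hv)
        simp only [hp, dif_pos h]
        exact Classical.choose_spec h
      have hcards : s.card ≤ M.edgeFinset.card := by
        apply Finset.card_le_card_of_injOn (fun v => s(v, p v))
          (fun v hv => SimpleGraph.mem_edgeFinset.mpr (hadj v hv))
        intro u hu v hv heq
        rcases Sym2.eq_iff.mp heq with ⟨h1, _⟩ | ⟨h1, h2⟩
        · exact h1
        · subst h1
          exact (hedge v hv _ hu (hadj v hv)).elim
      calc s.card ≤ M.edgeFinset.card := hcards
      _ ≤ (L v₀).card := (hM v₀ (p v₀) (hadj v₀ hv₀)).1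
      _ ≤ (s.biUnion L).card := Finset.card_le_card (Finset.subset_biUnion_of_mem L hv₀)
    · push_neg at hcov
      obtain ⟨w₀, hw₀s, hw₀⟩ := hcov
      have hout : ∀ e ∈ M.edgeFinset, ∃ x, x ∈ e ∧ x ∉ s := by
        intro e he
        induction e with
        | _ u w =>
          by_contra hcon
          push_neg at hcon
          have hu := hcon u (Sym2.mem_mk_left u w)
          have hw := hcon w (Sym2.mem_mk_right u w)
          exact hedge u hu w hw (SimpleGraph.mem_edgeFinset.mp he)
      set g : Sym2 V → V := fun e => if h : ∃ x, x ∈ e ∧ x ∉ s then Classical.choose h else v₀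
        with hg
      have hgspec : ∀ e ∈ M.edgeFinset, g e ∈ e ∧ g e ∉ s := by
        intro e he
        have h := hout e he
        simp only [hg, dif_pos h]
        exact Classical.choose_spec h
      have hks : M.edgeFinset.card ≤ (Finset.univ \ s).card := by
        apply Finset.card_le_card_of_injOn g
          (fun e he => Finset.mem_sdiff.mpr ⟨Finset.mem_univ _, (hgspec e he).2⟩)
        intro e₁ he₁ e₂ he₂ heq
        obtain ⟨y₁, hy₁, he₁'⟩ := mem_edge_aux (SimpleGraph.mem_edgeFinset.mp he₁) (hgspec e₁ he₁).1
        obtain ⟨y₂, hy₂, he₂'⟩ := mem_edge_aux (SimpleGraph.mem_edgeFinset.mp he₂) (hgspec e₂ he₂).1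
        rw [heq] at he₁' hy₁
        rw [hmatch (g e₂) y₁ y₂ hy₁ hy₂] at he₁'
        exact he₁'.trans he₂'.symm
      have hcardsdiff : (Finset.univ \ s).card = Fintype.card V - s.card := by
        rw [Finset.card_sdiff_of_subset (Finset.subset_univ s), Finset.card_univ]
      have hsle : s.card ≤ Fintype.card V := Finset.card_le_univ s
      have hscard : s.card ≤ Fintype.card V - M.edgeFinset.card := by omega
      calc s.card ≤ Fintype.card V - M.edgeFinset.card := hscard
      _ ≤ (L w₀).card := huncov w₀ hw₀
      _ ≤ (s.biUnion L).card := Finset.card_le_card (Finset.subset_biUnion_of_mem L hw₀s)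

lemma core : ∀ (N : ℕ) (V : Type) [Fintype V] [DecidableEq V],
    Fintype.card V ≤ N → ∀ (M : SimpleGraph V) [DecidableRel M.Adj],
    (∀ a b c, M.Adj a b → M.Adj a c → b = c) →
    ∀ L : V → Finset ℕ,
    (∀ a b, M.Adj a b → M.edgeFinset.card ≤ (L a).card ∧
      Fintype.card V ≤ (L a).card + (L b).card) →
    (∀ v, v ∉ M.support → Fintype.card V - M.edgeFinset.card ≤ (L v).card) →
    ∃ φ : V → ℕ, (∀ v, φ v ∈ L v) ∧ ∀ u v, u ≠ v → ¬ M.Adj u v → φ u ≠ φ v := by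
  intro N
  induction N with
  | zero =>
    intro V _ _ hcard M _ hmatch L hM huncov
    haveI : IsEmpty V := Fintype.card_eq_zero_iff.mp (Nat.le_zero.mp hcard)
    exact ⟨fun _ => 0, fun v => isEmptyElim v, fun u => isEmptyElim u⟩
  | succ N ih =>
    intro V _ _ hcard M _ hmatch L hM huncov
    by_cases hex : ∃ a b, M.Adj a b ∧ (L a ∩ L b).Nonempty
    · obtain ⟨a, b, hab, c, hc⟩ := hex
      rw [Finset.mem_inter] at hc
      have hne : a ≠ b := M.ne_of_adj hab
      -- the subtype of remaining vertices
      let p : V → Prop := fun v => ¬(v = a ∨ v = b)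
      haveI : DecidablePred p := fun v => instDecidableNot
      let V' := {v : V // p v}
      let M' : SimpleGraph V' := SimpleGraph.comap Subtype.val M
      haveI : DecidableRel M'.Adj := fun u v => ‹DecidableRel M.Adj› u.val v.val
      -- partner uniqueness facts
      have hA : ∀ w : V, M.Adj a w → w = b := fun w hw => hmatch a w b hw hab
      have hB : ∀ w : V, M.Adj b w → w = a := fun w hw => hmatch b w a hw hab.symm
      -- card of V'
      have hcV' : Fintype.card V' = Fintype.card V - 2 := by
        rw [Fintype.card_subtype]
        have h1 : Finset.univ.filter p = Finset.univ \ {a, b} := by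
          ext v
          simp [p, not_or]
        rw [h1, Finset.card_sdiff_of_subset (Finset.subset_univ _), Finset.card_univ,
          Finset.card_insert_of_notMem (by simp [hne]), Finset.card_singleton]
      have hcV2 : 2 ≤ Fintype.card V := Fintype.one_lt_card_iff.mpr ⟨a, b, hne⟩
      -- edge sets
      have hmem' : ∀ (u w : V'), M'.Adj u w ↔ M.Adj u.val w.val := fun u w => Iff.rfl
      have hedges : M.edgeFinset = insert s(a, b)
          (M'.edgeFinset.image (Sym2.map Subtype.val)) := by
        ext e
        simp only [Finset.mem_insert, Finset.mem_image]
        constructor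
        · intro he
          induction e with
          | _ u w =>
            have huw : M.Adj u w := SimpleGraph.mem_edgeFinset.mp he
            by_cases h : s(u, w) = s(a, b)
            · exact Or.inl h
            · right
              have hu : p u := by
                intro hor
                rcases hor with rfl | rfl
                · exact h (by rw [hA w huw])
                · exact h (by rw [hB w huw, Sym2.eq_swap])
              have hw : p w := by
                intro hor
                rcases hor with rfl | rfl
                · exact h (by rw [hA u huw.symm, Sym2.eq_swap])
                · exact h (by rw [hB u huw.symm])
              refine ⟨s(⟨u, hu⟩, ⟨w, hw⟩), ?_, rfl⟩
              exact SimpleGraph.mem_edgeFinset.mpr huw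
        · rintro (rfl | ⟨e', he', rfl⟩)
          · exact SimpleGraph.mem_edgeFinset.mpr hab
          · induction e' with
            | _ u w =>
              exact SimpleGraph.mem_edgeFinset.mpr
                (SimpleGraph.mem_edgeFinset.mp he' : M.Adj u.val w.val)
      have hnotmem : s(a, b) ∉ M'.edgeFinset.image (Sym2.map Subtype.val) := by
        simp only [Finset.mem_image]
        rintro ⟨e', he', heq⟩
        induction e' with
        | _ u w =>
          rw [Sym2.map_pair_eq, Sym2.eq_iff] at heq
          rcases heq with ⟨h1, _⟩ | ⟨h1, _⟩
          · exact u.prop (Or.inl h1)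
          · exact u.prop (Or.inr h1)
      have hkk : M.edgeFinset.card = M'.edgeFinset.card + 1 := by
        rw [hedges, Finset.card_insert_of_notMem hnotmem,
          Finset.card_image_of_injective _ (Sym2.map.injective Subtype.val_injective)]
      -- new lists
      let L' : V' → Finset ℕ := fun v => (L v.val).erase c
      have hL'card : ∀ v : V', (L v.val).card - 1 ≤ (L' v).card :=
        fun v => Finset.pred_card_le_card_erase
      -- support transfer
      have hsupp : ∀ v : V', v ∉ M'.support → v.val ∉ M.support := by
        intro v hv hvs
        obtain ⟨w, hw⟩ := (SimpleGraph.mem_support M).mp hvs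
        have hwp : p w := by
          intro hor
          rcases hor with rfl | rfl
          · exact v.prop (Or.inr (hA v.val hw.symm))
          · exact v.prop (Or.inl (hB v.val hw.symm))
        exact hv ((SimpleGraph.mem_support M').mpr ⟨⟨w, hwp⟩, hw⟩)
      -- apply induction hypothesis
      have hrec := ih V' (by omega) M'
        (fun x y z hxy hxz => Subtype.ext (hmatch x.val y.val z.val hxy hxz)) L'
        (by
          intro x y hxy
          have h1 := hM x.val y.val hxy
          have h2 := hM y.val x.val hxy.symm
          have h3 := hL'card x
          have h4 := hL'card y
          have h5 : 1 ≤ (L x.val).card := le_trans (by omega) h1.1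
          have h6 : 1 ≤ (L y.val).card := le_trans (by omega) h2.1
          constructor <;> omega)
        (by
          intro v hv
          have h1 := huncov v.val (hsupp v hv)
          have h3 := hL'card v
          omega)
      obtain ⟨φ', hφ'mem, hφ'proper⟩ := hrec
      -- assemble the coloring
      refine ⟨fun v => if h : v = a ∨ v = b then c else φ' ⟨v, h⟩, ?_, ?_⟩
      · intro v
        dsimp only
        by_cases h : v = a ∨ v = b
        · rw [dif_pos h]
          rcases h with rfl | rfl
          · exact hc.1
          · exact hc.2
        · rw [dif_neg h]
          exact Finset.erase_subset _ _ (hφ'mem ⟨v, h⟩)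
      · intro u v huv hnadj
        dsimp only
        by_cases hu : u = a ∨ u = b <;> by_cases hv : v = a ∨ v = b
        · exfalso
          rcases hu with rfl | rfl <;> rcases hv with rfl | rfl
          · exact huv rfl
          · exact hnadj hab
          · exact hnadj hab.symm
          · exact huv rfl
        · rw [dif_pos hu, dif_neg hv]
          exact fun h => (Finset.notMem_erase c _) (h ▸ hφ'mem ⟨v, hv⟩)
        · rw [dif_neg hu, dif_pos hv]
          exact fun h => (Finset.notMem_erase c _) (h ▸ hφ'mem ⟨u, hu⟩)
        · rw [dif_neg hu, dif_neg hv]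
          exact hφ'proper ⟨u, hu⟩ ⟨v, hv⟩ (fun h => huv (congrArg Subtype.val h)) hnadj
    · push_neg at hex
      have hdisj : ∀ x y, M.Adj x y → Disjoint (L x) (L y) := by
        intro x y hxy
        rw [Finset.disjoint_iff_inter_eq_empty]
        exact hex x y hxy
      obtain ⟨φ, hinj, hmem⟩ := hall_case M hmatch L hM huncov hdisj
      exact ⟨φ, hmem, fun u v huv _ h => huv (hinj h)⟩

theorem stmt_0 {n : ℕ} (M : SimpleGraph (Fin n)) [DecidableRel M.Adj]
    (hmatch : ∀ a b c, M.Adj a b → M.Adj a c → b = c)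
    (L : Fin n → Finset ℕ) (hLne : ∀ v, (L v).Nonempty)
    (hM : ∀ a b, M.Adj a b → M.edgeFinset.card ≤ (L a).card ∧
      n ≤ (L a).card + (L b).card)
    (huncov : ∀ v, v ∉ M.support → n - M.edgeFinset.card ≤ (L v).card) :
    ∃ φ : Fin n → ℕ, (∀ v, φ v ∈ L v) ∧
      ∀ u v, ((⊤ : SimpleGraph (Fin n)) \ M).Adj u v → φ u ≠ φ v := by
  obtain ⟨φ, hmem, hproper⟩ := core n (Fin n) (by simp) M hmatch L
    (by simpa using hM) (by simpa using huncov)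
  refine ⟨φ, hmem, ?_⟩
  intro u v huv
  rw [SimpleGraph.sdiff_adj, SimpleGraph.top_adj] at huv
  exact hproper u v huv.1 huv.2
end

section
/- Let G be a graph with list-assignment L such that G is L-critical (G is not L-colorable but every proper induced subgraph of G is L-colorable). Let H be an induced subgraph of G and let M be a matching in the complement of H. Then the number of edges of the complement of H satisfies |E(H̄)| ≥ |M|(|V(H)| − |M|) − Σ_{u ∈ V(H)} Save_L(u), where Save_L(u) = d_G(u) + 1 − |L(u)|. -/
open SimpleGraph Finset

/-- `G` restricted to `S` has a proper coloring from the lists `L`. -/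
def ColorableOn {V : Type*} [Fintype V] (G : SimpleGraph V) (L : V → Finset ℕ)
    (S : Finset V) : Prop :=
  ∃ φ : V → ℕ, (∀ v ∈ S, φ v ∈ L v) ∧ ∀ u ∈ S, ∀ v ∈ S, G.Adj u v → φ u ≠ φ v

section Aux
variable {V : Type*} [Fintype V] [DecidableEq V] (G : SimpleGraph V) [DecidableRel G.Adj]

/-- number of non-neighbors of `v` inside `T` (excluding `v`). -/
def dbar (T : Finset V) (v : V) : ℕ := ((T.erase v).filter (fun u => ¬ G.Adj v u)).card

/-- twice the number of non-edges inside `T`. -/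
def esum (T : Finset V) : ℕ := ∑ v ∈ T, dbar G T v

lemma dbar_erase {T : Finset V} {x v : V} (hx : x ∈ T) (hv : v ∈ T.erase x) :
    dbar G T v = dbar G (T.erase x) v + (if ¬ G.Adj v x then 1 else 0) := by
  have hvx : v ≠ x := (Finset.mem_erase.mp hv).1
  have key : dbar G (T.erase x) v
      = (((T.erase v).filter (fun u => ¬ G.Adj v u)).erase x).card := by
    unfold dbar
    rw [Finset.erase_right_comm, Finset.filter_erase]
  rw [key]
  unfold dbar
  by_cases h : G.Adj v x
  · have hnm : x ∉ (T.erase v).filter (fun u => ¬ G.Adj v u) := by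
      intro hmem
      exact (Finset.mem_filter.mp hmem).2 h
    rw [if_neg (by simp [h]), Finset.erase_eq_of_notMem hnm, Nat.add_zero]
  · have hmem : x ∈ (T.erase v).filter (fun u => ¬ G.Adj v u) :=
      Finset.mem_filter.mpr ⟨Finset.mem_erase.mpr ⟨hvx.symm, hx⟩, h⟩
    rw [if_pos (by simp [h])]
    have hc := Finset.card_erase_of_mem hmem
    have : 1 ≤ ((T.erase v).filter (fun u => ¬ G.Adj v u)).card :=
      Finset.card_pos.mpr ⟨x, hmem⟩
    omega

lemma esum_erase {T : Finset V} {x : V} (hx : x ∈ T) :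
    esum G T = esum G (T.erase x) + 2 * dbar G T x := by
  unfold esum
  rw [← Finset.sum_erase_add _ _ hx]
  have h2 : ((T.erase x).filter (fun v => ¬ G.Adj v x)).card = dbar G T x := by
    unfold dbar
    congr 1
    apply Finset.filter_congr
    intro u _
    simp [adj_comm]
  have h1 : ∑ v ∈ T.erase x, dbar G T v
      = (∑ v ∈ T.erase x, dbar G (T.erase x) v) + dbar G T x := by
    calc ∑ v ∈ T.erase x, dbar G T v
        = ∑ v ∈ T.erase x, (dbar G (T.erase x) v + (if ¬ G.Adj v x then 1 else 0)) :=
          Finset.sum_congr rfl (fun v hv => dbar_erase G hx hv)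
      _ = (∑ v ∈ T.erase x, dbar G (T.erase x) v)
            + ∑ v ∈ T.erase x, (if ¬ G.Adj v x then 1 else 0) := Finset.sum_add_distrib
      _ = (∑ v ∈ T.erase x, dbar G (T.erase x) v) + dbar G T x := by
          have h3 := Finset.sum_boole (R := ℕ) (fun v => ¬ G.Adj v x) (T.erase x)
          simp only [Nat.cast_id] at h3
          rw [h3, h2]
  rw [h1]
  omega

/-- greedy coloring when all lists are large. -/
lemma greedy : ∀ (n : ℕ) (T : Finset V) (K : V → Finset ℕ), T.card ≤ n →
    (∀ v ∈ T, T.card ≤ (K v).card) →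
    ∃ φ : V → ℕ, (∀ v ∈ T, φ v ∈ K v) ∧ ∀ u ∈ T, ∀ v ∈ T, G.Adj u v → φ u ≠ φ v := by
  intro n
  induction n with
  | zero =>
    intro T K hc _
    have : T = ∅ := Finset.card_eq_zero.mp (Nat.le_zero.mp hc)
    subst this
    exact ⟨fun _ => 0, by simp, by simp⟩
  | succ n ih =>
    intro T K hc hK
    rcases T.eq_empty_or_nonempty with rfl | ⟨x, hx⟩
    · exact ⟨fun _ => 0, by simp, by simp⟩
    · have hTe : (T.erase x).card ≤ n := by
        have := Finset.card_erase_of_mem hx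
        have := Finset.card_pos.mpr ⟨x, hx⟩
        omega
      obtain ⟨φ, hφm, hφp⟩ := ih (T.erase x) K hTe (fun v hv => by
        have := hK v (Finset.mem_of_mem_erase hv)
        have := Finset.card_erase_of_mem hx
        omega)
      have hlt : ((T.erase x).image φ).card < (K x).card := by
        calc ((T.erase x).image φ).card ≤ (T.erase x).card := Finset.card_image_le
        _ < T.card := by
            have := Finset.card_erase_of_mem hx
            have := Finset.card_pos.mpr ⟨x, hx⟩
            omega
        _ ≤ (K x).card := hK x hx
      have : ¬ (K x ⊆ (T.erase x).image φ) := fun hsub => absurd (Finset.card_le_card hsub) (by omega)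
      obtain ⟨c, hcK, hcim⟩ := Finset.not_subset.mp this
      refine ⟨fun v => if v = x then c else φ v, ?_, ?_⟩
      · intro v hv
        by_cases h : v = x
        · simp [h, hcK]
        · simp only [if_neg h]
          exact hφm v (Finset.mem_erase.mpr ⟨h, hv⟩)
      · intro u hu v hv hadj
        have hne := G.ne_of_adj hadj
        by_cases h1 : u = x <;> by_cases h2 : v = x
        · exact absurd (h1.trans h2.symm) hne
        · simp only [if_pos h1, if_neg h2]
          intro h
          exact hcim (by rw [h]; exact Finset.mem_image_of_mem φ (Finset.mem_erase.mpr ⟨h2, hv⟩))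
        · simp only [if_neg h1, if_pos h2]
          intro h
          exact hcim (by rw [← h]; exact Finset.mem_image_of_mem φ (Finset.mem_erase.mpr ⟨h1, hu⟩))
        · simp only [if_neg h1, if_neg h2]
          exact hφp u (Finset.mem_erase.mpr ⟨h1, hu⟩) v (Finset.mem_erase.mpr ⟨h2, hv⟩) hadj


lemma pureLemma : ∀ (n : ℕ) (T : Finset V) (PP : Finset (V × V)) (K : V → Finset ℕ),
    T.card ≤ n →
    (∀ p ∈ PP, p.1 ∈ T ∧ p.2 ∈ T ∧ ¬ G.Adj p.1 p.2 ∧ p.1 ≠ p.2) →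
    (∀ p ∈ PP, ∀ q ∈ PP, p ≠ q → p.1 ≠ q.1 ∧ p.1 ≠ q.2 ∧ p.2 ≠ q.1 ∧ p.2 ≠ q.2) →
    (∀ p ∈ PP, PP.card + 1 ≤ (K p.1).card ∧ PP.card + 1 ≤ (K p.2).card) →
    (∀ p ∈ PP, T.card + 1 ≤ (K p.1).card + (K p.2).card) →
    (∀ u ∈ T, (∀ p ∈ PP, u ≠ p.1 ∧ u ≠ p.2) → T.card + 1 ≤ (K u).card + PP.card) →
    ∃ φ : V → ℕ, (∀ v ∈ T, φ v ∈ K v) ∧ ∀ u ∈ T, ∀ v ∈ T, G.Adj u v → φ u ≠ φ v := by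
  intro n
  induction n with
  | zero =>
    intro T PP K hc _ _ _ _ _
    have : T = ∅ := Finset.card_eq_zero.mp (Nat.le_zero.mp hc)
    subst this
    exact ⟨fun _ => 0, by simp, by simp⟩
  | succ n ih =>
    intro T PP K hc hPP1 hPP2 hK1 hK2 hK3
    rcases PP.eq_empty_or_nonempty with rfl | hPPne
    · exact greedy G T.card T K le_rfl (fun v hv => by
        have := hK3 v hv (by simp)
        simp at this ⊢
        omega)
    by_contra hno
    -- Hall's condition must fail
    have hHall : ¬ ∀ (s : Finset {x // x ∈ T}), s.card ≤ (s.biUnion fun x => K x.1).card := by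
      intro hall
      obtain ⟨f, hfinj, hfm⟩ := (Finset.all_card_le_biUnion_card_iff_exists_injective
        (fun (x : {x // x ∈ T}) => K x.1)).mp hall
      apply hno
      refine ⟨fun v => if h : v ∈ T then f ⟨v, h⟩ else 0, ?_, ?_⟩
      · intro v hv; simp only [dif_pos hv]; exact hfm _
      · intro u hu v hv hadj
        simp only [dif_pos hu, dif_pos hv]
        intro h
        exact G.ne_of_adj hadj (Subtype.ext_iff.mp (hfinj h))
    push_neg at hHall
    obtain ⟨s, hs⟩ := hHall
    set W : Finset V := s.image Subtype.val with hWdef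
    have hWT : W ⊆ T := by
      intro v hv
      obtain ⟨x, _, rfl⟩ := Finset.mem_image.mp hv
      exact x.2
    have hWcard : W.card = s.card := Finset.card_image_of_injective _ Subtype.val_injective
    have hUdef : W.biUnion K = s.biUnion (fun x => K x.1) := by
      rw [hWdef, Finset.image_biUnion]
    have hUW : (W.biUnion K).card + 1 ≤ W.card := by
      rw [hUdef, hWcard]; omega
    -- W contains a full pair
    have hpair : ∃ p ∈ PP, p.1 ∈ W ∧ p.2 ∈ W := by
      by_contra hnp
      push_neg at hnp
      by_cases hun : ∃ u ∈ W, ∀ p ∈ PP, u ≠ p.1 ∧ u ≠ p.2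
      · obtain ⟨u, huW, hum⟩ := hun
        have h1 : T.card + 1 ≤ (K u).card + PP.card := hK3 u (hWT huW) hum
        have h2 : (K u).card ≤ (W.biUnion K).card :=
          Finset.card_le_card (Finset.subset_biUnion_of_mem K huW)
        have h3 : PP.card ≤ (T \ W).card := by
          apply Finset.card_le_card_of_injOn (fun p => if p.1 ∈ W then p.2 else p.1)
          · intro p hp
            obtain ⟨hp1, hp2, _, _⟩ := hPP1 p hp
            by_cases h : p.1 ∈ W
            · simp only [if_pos h]
              exact Finset.mem_sdiff.mpr ⟨hp2, hnp p hp h⟩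
            · simp only [if_neg h]
              exact Finset.mem_sdiff.mpr ⟨hp1, h⟩
          · intro p hp q hq hpq
            by_contra hne
            obtain ⟨d1, d2, d3, d4⟩ := hPP2 p (by simpa using hp) q (by simpa using hq) hne
            by_cases h1 : p.1 ∈ W <;> by_cases h2 : q.1 ∈ W <;>
              simp only [if_pos, if_neg, h1, h2] at hpq <;> tauto
        have h4 : (T \ W).card = T.card - W.card := Finset.card_sdiff_of_subset hWT
        have h5 : W.card ≤ T.card := Finset.card_le_card hWT
        omega
      · push_neg at hun
        have hWne : W.Nonempty := Finset.card_pos.mp (by omega)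
        obtain ⟨v, hvW⟩ := hWne
        obtain ⟨p0, hp0, hv0x⟩ := hun v hvW
        have hv0 : v = p0.1 ∨ v = p0.2 := by by_cases h : v = p0.1 <;> tauto
        have hKv : PP.card + 1 ≤ (K v).card := by
          rcases hv0 with h | h
          · rw [h]; exact (hK1 p0 hp0).1
          · rw [h]; exact (hK1 p0 hp0).2
        have h2 : (K v).card ≤ (W.biUnion K).card :=
          Finset.card_le_card (Finset.subset_biUnion_of_mem K hvW)
        have h3 : W.card ≤ PP.card := by
          have hchoice : ∀ u ∈ W, ∃ p, p ∈ PP ∧ (u = p.1 ∨ u = p.2) := by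
            intro u hu
            obtain ⟨p, hp, h⟩ := hun u hu
            exact ⟨p, hp, by by_cases hh : u = p.1 <;> tauto⟩
          choose pf hpf1 hpf2 using hchoice
          apply Finset.card_le_card_of_injOn
            (fun u => if h : u ∈ W then pf u h else p0)
          · intro u hu
            simp only [dif_pos (show u ∈ W from hu)]
            exact hpf1 u hu
          · intro u hu' w hw' huw
            simp only [Finset.mem_coe] at hu' hw'
            simp only [dif_pos hu', dif_pos hw'] at huw
            by_contra hne
            have hu2 := hpf2 u hu'
            have hw2 := hpf2 w hw'
            rw [huw] at hu2
            -- u and w are distinct endpoints of the same pair pf w hw'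
            set q := pf w hw' with hq
            have hqPP : q ∈ PP := hpf1 w hw'
            have : q.1 ∈ W ∧ q.2 ∈ W := by
              rcases hu2 with h1 | h1 <;> rcases hw2 with h2 | h2
              · exact absurd (h1.trans h2.symm) hne
              · exact ⟨h1 ▸ hu', h2 ▸ hw'⟩
              · exact ⟨h2 ▸ hw', h1 ▸ hu'⟩
              · exact absurd (h1.trans h2.symm) hne
            exact hnp q hqPP this.1 this.2
        omega
    obtain ⟨p, hpPP, hpW1, hpW2⟩ := hpair
    obtain ⟨hxT, hyT, hnadj, hne⟩ := hPP1 p hpPP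
    -- the two lists intersect
    have hcap : 1 ≤ (K p.1 ∩ K p.2).card := by
      have hsub : K p.1 ∪ K p.2 ⊆ W.biUnion K :=
        Finset.union_subset (Finset.subset_biUnion_of_mem K hpW1)
          (Finset.subset_biUnion_of_mem K hpW2)
      have h1 := Finset.card_union_add_card_inter (K p.1) (K p.2)
      have h2 := Finset.card_le_card hsub
      have h3 := hK2 p hpPP
      have h5 : W.card ≤ T.card := Finset.card_le_card hWT
      omega
    obtain ⟨c, hc⟩ := Finset.card_pos.mp hcap
    have hcx : c ∈ K p.1 := (Finset.mem_inter.mp hc).1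
    have hcy : c ∈ K p.2 := (Finset.mem_inter.mp hc).2
    -- recurse
    set T2 := (T.erase p.1).erase p.2 with hT2def
    set PP2 := PP.erase p with hPP2def
    set K2 : V → Finset ℕ :=
      fun v => if G.Adj p.1 v ∨ G.Adj p.2 v then (K v).erase c else K v with hK2def
    have hyT' : p.2 ∈ T.erase p.1 := Finset.mem_erase.mpr ⟨hne.symm, hyT⟩
    have hT2card : T2.card + 2 = T.card := by
      rw [hT2def, Finset.card_erase_of_mem hyT', Finset.card_erase_of_mem hxT]
      have h1 : 1 ≤ (T.erase p.1).card := Finset.card_pos.mpr ⟨p.2, hyT'⟩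
      have h2 := Finset.card_erase_of_mem hxT
      omega
    have hPP2card : PP2.card + 1 = PP.card := by
      rw [hPP2def, Finset.card_erase_of_mem hpPP]
      have : 1 ≤ PP.card := Finset.card_pos.mpr ⟨p, hpPP⟩
      omega
    have hK2sub : ∀ v, K2 v ⊆ K v := by
      intro v
      rw [hK2def]
      by_cases h : G.Adj p.1 v ∨ G.Adj p.2 v
      · simp only [if_pos h]; exact Finset.erase_subset _ _
      · simp only [if_neg h]; exact Finset.Subset.refl _
    have hK2card : ∀ v, (K v).card ≤ (K2 v).card + 1 := by
      intro v
      rw [hK2def]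
      by_cases h : G.Adj p.1 v ∨ G.Adj p.2 v
      · simp only [if_pos h]
        by_cases hcv : c ∈ K v
        · rw [Finset.card_erase_of_mem hcv]
          have : 1 ≤ (K v).card := Finset.card_pos.mpr ⟨c, hcv⟩
          omega
        · rw [Finset.erase_eq_of_notMem hcv]; omega
      · simp only [if_neg h]; omega
    have hmemT2 : ∀ q ∈ PP2, q.1 ∈ T2 ∧ q.2 ∈ T2 := by
      intro q hq
      have hqPP : q ∈ PP := Finset.mem_of_mem_erase hq
      have hqne : q ≠ p := (Finset.mem_erase.mp hq).1
      obtain ⟨d1, d2, d3, d4⟩ := hPP2 q hqPP p hpPP hqne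
      obtain ⟨hq1, hq2, _, _⟩ := hPP1 q hqPP
      constructor
      · exact Finset.mem_erase.mpr ⟨d2, Finset.mem_erase.mpr ⟨d1, hq1⟩⟩
      · exact Finset.mem_erase.mpr ⟨d4, Finset.mem_erase.mpr ⟨d3, hq2⟩⟩
    obtain ⟨ψ, hψm, hψp⟩ := ih T2 PP2 K2 (by omega)
      (fun q hq => ⟨(hmemT2 q hq).1, (hmemT2 q hq).2,
        (hPP1 q (Finset.mem_of_mem_erase hq)).2.2.1,
        (hPP1 q (Finset.mem_of_mem_erase hq)).2.2.2⟩)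
      (fun q hq r hr hqr =>
        hPP2 q (Finset.mem_of_mem_erase hq) r (Finset.mem_of_mem_erase hr) hqr)
      (fun q hq => by
        have h1 := hK1 q (Finset.mem_of_mem_erase hq)
        have h2 := hK2card q.1
        have h3 := hK2card q.2
        omega)
      (fun q hq => by
        have h1 := hK2 q (Finset.mem_of_mem_erase hq)
        have h2 := hK2card q.1
        have h3 := hK2card q.2
        omega)
      (fun u hu hum => by
        have huT : u ∈ T := Finset.mem_of_mem_erase (Finset.mem_of_mem_erase hu)
        have hum' : ∀ q ∈ PP, u ≠ q.1 ∧ u ≠ q.2 := by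
          intro q hq
          by_cases hqp : q = p
          · subst hqp
            exact ⟨(Finset.mem_erase.mp (Finset.mem_of_mem_erase hu)).1,
              (Finset.mem_erase.mp hu).1⟩
          · exact hum q (Finset.mem_erase.mpr ⟨hqp, hq⟩)
        have h1 := hK3 u huT hum'
        have h2 := hK2card u
        omega)
    apply hno
    refine ⟨fun v => if v = p.1 ∨ v = p.2 then c else ψ v, ?_, ?_⟩
    · intro v hv
      by_cases h : v = p.1 ∨ v = p.2
      · rcases h with h | h <;> simp only [if_pos, h] <;> simp [hcx, hcy]
      · push_neg at h
        simp only [if_neg (by tauto : ¬ (v = p.1 ∨ v = p.2))]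
        exact hK2sub v (hψm v (Finset.mem_erase.mpr ⟨h.2, Finset.mem_erase.mpr ⟨h.1, hv⟩⟩))
    · intro u hu v hv hadj
      have hneuv := G.ne_of_adj hadj
      by_cases h1 : u = p.1 ∨ u = p.2 <;> by_cases h2 : v = p.1 ∨ v = p.2
      · exfalso
        rcases h1 with h1 | h1 <;> rcases h2 with h2 | h2 <;> subst h1 <;> subst h2
        · exact G.irrefl hadj
        · exact hnadj hadj
        · exact hnadj (G.adj_symm hadj)
        · exact G.irrefl hadj
      · push_neg at h2
        simp only [if_pos h1, if_neg (by tauto : ¬ (v = p.1 ∨ v = p.2))]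
        have hvT2 : v ∈ T2 := Finset.mem_erase.mpr ⟨h2.2, Finset.mem_erase.mpr ⟨h2.1, hv⟩⟩
        have hadj' : G.Adj p.1 v ∨ G.Adj p.2 v := by
          rcases h1 with h1 | h1
          · exact Or.inl (h1 ▸ hadj)
          · exact Or.inr (h1 ▸ hadj)
        have := hψm v hvT2
        rw [hK2def] at this
        simp only [if_pos hadj'] at this
        intro heq
        exact (Finset.mem_erase.mp this).1 heq.symm
      · push_neg at h1
        simp only [if_pos h2, if_neg (by tauto : ¬ (u = p.1 ∨ u = p.2))]
        have huT2 : u ∈ T2 := Finset.mem_erase.mpr ⟨h1.2, Finset.mem_erase.mpr ⟨h1.1, hu⟩⟩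
        have hadj' : G.Adj p.1 u ∨ G.Adj p.2 u := by
          rcases h2 with h2 | h2
          · exact Or.inl (h2 ▸ (G.adj_symm hadj))
          · exact Or.inr (h2 ▸ (G.adj_symm hadj))
        have := hψm u huT2
        rw [hK2def] at this
        simp only [if_pos hadj'] at this
        exact (Finset.mem_erase.mp this).1
      · push_neg at h1; push_neg at h2
        simp only [if_neg (by tauto : ¬ (u = p.1 ∨ u = p.2)),
          if_neg (by tauto : ¬ (v = p.1 ∨ v = p.2))]
        exact hψp u (Finset.mem_erase.mpr ⟨h1.2, Finset.mem_erase.mpr ⟨h1.1, hu⟩⟩)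
          v (Finset.mem_erase.mpr ⟨h2.2, Finset.mem_erase.mpr ⟨h2.1, hv⟩⟩) hadj


lemma mainLemma (L : V → Finset ℕ)
    (hcrit : ¬ ColorableOn G L univ ∧ ∀ S : Finset V, S ⊂ univ → ColorableOn G L S) :
    ∀ (n : ℕ) (T : Finset V) (PP : Finset (V × V)), T.card ≤ n →
    (∀ p ∈ PP, p.1 ∈ T ∧ p.2 ∈ T ∧ ¬ G.Adj p.1 p.2 ∧ p.1 ≠ p.2) →
    (∀ p ∈ PP, ∀ q ∈ PP, p ≠ q → p.1 ≠ q.1 ∧ p.1 ≠ q.2 ∧ p.2 ≠ q.1 ∧ p.2 ≠ q.2) →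
    (esum G T : ℤ) ≥ 2 * PP.card * ((T.card : ℤ) - PP.card)
      - 2 * ∑ v ∈ T, ((G.degree v : ℤ) + 1 - (L v).card) := by
  intro n
  induction n with
  | zero =>
    intro T PP hc hPP1 _
    have hT : T = ∅ := Finset.card_eq_zero.mp (Nat.le_zero.mp hc)
    subst hT
    have hPP : PP = ∅ :=
      Finset.eq_empty_of_forall_notMem (fun p hp => by simpa using (hPP1 p hp).1)
    subst hPP
    simp [esum]
  | succ n ih =>
    intro T PP hc hPP1 hPP2
    rcases T.eq_empty_or_nonempty with rfl | hTne
    · have hPP : PP = ∅ :=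
        Finset.eq_empty_of_forall_notMem (fun p hp => by simpa using (hPP1 p hp).1)
      subst hPP
      simp [esum]
    set sv : V → ℤ := fun v => (G.degree v : ℤ) + 1 - (L v).card with hsv
    by_cases hC1 : ∃ p ∈ PP, (T.card : ℤ) ≤ dbar G T p.1 + dbar G T p.2 + sv p.1 + sv p.2
    · obtain ⟨p, hpPP, hineq⟩ := hC1
      obtain ⟨hxT, hyT, hnadj, hne⟩ := hPP1 p hpPP
      have hyT' : p.2 ∈ T.erase p.1 := Finset.mem_erase.mpr ⟨hne.symm, hyT⟩
      set T2 := (T.erase p.1).erase p.2 with hT2def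
      set PP2 := PP.erase p with hPP2def
      have hT2card : T2.card + 2 = T.card := by
        rw [hT2def, Finset.card_erase_of_mem hyT', Finset.card_erase_of_mem hxT]
        have h1 : 1 ≤ (T.erase p.1).card := Finset.card_pos.mpr ⟨p.2, hyT'⟩
        have h2 := Finset.card_erase_of_mem hxT
        omega
      have hPP2card : PP2.card + 1 = PP.card := by
        rw [hPP2def, Finset.card_erase_of_mem hpPP]
        have : 1 ≤ PP.card := Finset.card_pos.mpr ⟨p, hpPP⟩
        omega
      have e1 : esum G T = esum G (T.erase p.1) + 2 * dbar G T p.1 := esum_erase G hxT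
      have e2 : esum G (T.erase p.1) = esum G T2 + 2 * dbar G (T.erase p.1) p.2 :=
        esum_erase G hyT'
      have e3 : dbar G T p.2 = dbar G (T.erase p.1) p.2 + 1 := by
        have h := dbar_erase G hxT hyT'
        rwa [if_pos (fun h' => hnadj (G.adj_symm h'))] at h
      have hsum : ∑ v ∈ T, sv v = (∑ v ∈ T2, sv v) + sv p.2 + sv p.1 := by
        rw [Finset.sum_erase_add _ _ hyT', Finset.sum_erase_add _ _ hxT]
      have hmemT2 : ∀ q ∈ PP2, q.1 ∈ T2 ∧ q.2 ∈ T2 := by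
        intro q hq
        have hqPP : q ∈ PP := Finset.mem_of_mem_erase hq
        have hqne : q ≠ p := (Finset.mem_erase.mp hq).1
        obtain ⟨d1, d2, d3, d4⟩ := hPP2 q hqPP p hpPP hqne
        obtain ⟨hq1, hq2, _, _⟩ := hPP1 q hqPP
        exact ⟨Finset.mem_erase.mpr ⟨d2, Finset.mem_erase.mpr ⟨d1, hq1⟩⟩,
          Finset.mem_erase.mpr ⟨d4, Finset.mem_erase.mpr ⟨d3, hq2⟩⟩⟩
      have IH := ih T2 PP2 (by omega)
        (fun q hq => ⟨(hmemT2 q hq).1, (hmemT2 q hq).2,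
          (hPP1 q (Finset.mem_of_mem_erase hq)).2.2.1,
          (hPP1 q (Finset.mem_of_mem_erase hq)).2.2.2⟩)
        (fun q hq r hr hqr =>
          hPP2 q (Finset.mem_of_mem_erase hq) r (Finset.mem_of_mem_erase hr) hqr)
      have hm2 : (PP2.card : ℤ) = (PP.card : ℤ) - 1 := by
        have := hPP2card; push_cast [← this]; ring
      have ht2 : (T2.card : ℤ) = (T.card : ℤ) - 2 := by
        have := hT2card; push_cast [← this]; ring
      rw [hm2, ht2] at IH
      have ecast : (esum G T : ℤ)
          = (esum G T2 : ℤ) + 2 * dbar G T p.1 + 2 * dbar G T p.2 - 2 := by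
        rw [e1, e2, e3]; push_cast; ring
      rw [ecast, hsum]
      nlinarith [IH, hineq]
    · by_cases hC2 : ∃ p ∈ PP, ∃ q : V × V, (q = p ∨ q = (p.2, p.1)) ∧
          (T.card : ℤ) - PP.card ≤ dbar G T q.1 + sv q.1
      · obtain ⟨p, hpPP, q, hqor, hineq⟩ := hC2
        obtain ⟨hxT, hyT, hnadj, hne⟩ := hPP1 p hpPP
        have hq1T : q.1 ∈ T := by rcases hqor with rfl | rfl; exacts [hxT, hyT]
        set T2 := T.erase q.1 with hT2def
        set PP2 := PP.erase p with hPP2def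
        have hT2card : T2.card + 1 = T.card := by
          rw [hT2def, Finset.card_erase_of_mem hq1T]
          have : 1 ≤ T.card := Finset.card_pos.mpr ⟨q.1, hq1T⟩
          omega
        have hPP2card : PP2.card + 1 = PP.card := by
          rw [hPP2def, Finset.card_erase_of_mem hpPP]
          have : 1 ≤ PP.card := Finset.card_pos.mpr ⟨p, hpPP⟩
          omega
        have e1 : esum G T = esum G T2 + 2 * dbar G T q.1 := esum_erase G hq1T
        have hsum : ∑ v ∈ T, sv v = (∑ v ∈ T2, sv v) + sv q.1 :=
          (Finset.sum_erase_add _ _ hq1T).symm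
        have hmemT2 : ∀ r ∈ PP2, r.1 ∈ T2 ∧ r.2 ∈ T2 := by
          intro r hr
          have hrPP : r ∈ PP := Finset.mem_of_mem_erase hr
          have hrne : r ≠ p := (Finset.mem_erase.mp hr).1
          obtain ⟨d1, d2, d3, d4⟩ := hPP2 r hrPP p hpPP hrne
          obtain ⟨hr1, hr2, _, _⟩ := hPP1 r hrPP
          have hne1 : r.1 ≠ q.1 := by rcases hqor with rfl | rfl; exacts [d1, d2]
          have hne2 : r.2 ≠ q.1 := by rcases hqor with rfl | rfl; exacts [d3, d4]
          exact ⟨Finset.mem_erase.mpr ⟨hne1, hr1⟩, Finset.mem_erase.mpr ⟨hne2, hr2⟩⟩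
        have IH := ih T2 PP2 (by omega)
          (fun r hr => ⟨(hmemT2 r hr).1, (hmemT2 r hr).2,
            (hPP1 r (Finset.mem_of_mem_erase hr)).2.2.1,
            (hPP1 r (Finset.mem_of_mem_erase hr)).2.2.2⟩)
          (fun r hr w hw hrw =>
            hPP2 r (Finset.mem_of_mem_erase hr) w (Finset.mem_of_mem_erase hw) hrw)
        have hm2 : (PP2.card : ℤ) = (PP.card : ℤ) - 1 := by
          have := hPP2card; push_cast [← this]; ring
        have ht2 : (T2.card : ℤ) = (T.card : ℤ) - 1 := by
          have := hT2card; push_cast [← this]; ring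
        rw [hm2, ht2] at IH
        have ecast : (esum G T : ℤ) = (esum G T2 : ℤ) + 2 * dbar G T q.1 := by
          rw [e1]; push_cast; ring
        rw [ecast, hsum]
        nlinarith [IH, hineq]
      · by_cases hC3 : ∃ u ∈ T, (∀ p ∈ PP, u ≠ p.1 ∧ u ≠ p.2) ∧
            (PP.card : ℤ) ≤ dbar G T u + sv u
        · obtain ⟨u, huT, hum, hineq⟩ := hC3
          set T2 := T.erase u with hT2def
          have hT2card : T2.card + 1 = T.card := by
            rw [hT2def, Finset.card_erase_of_mem huT]
            have : 1 ≤ T.card := Finset.card_pos.mpr ⟨u, huT⟩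
            omega
          have e1 : esum G T = esum G T2 + 2 * dbar G T u := esum_erase G huT
          have hsum : ∑ v ∈ T, sv v = (∑ v ∈ T2, sv v) + sv u :=
            (Finset.sum_erase_add _ _ huT).symm
          have IH := ih T2 PP (by omega)
            (fun p hp => ⟨Finset.mem_erase.mpr ⟨Ne.symm (hum p hp).1, (hPP1 p hp).1⟩,
              Finset.mem_erase.mpr ⟨Ne.symm (hum p hp).2, (hPP1 p hp).2.1⟩,
              (hPP1 p hp).2.2.1, (hPP1 p hp).2.2.2⟩)
            hPP2
          have ht2 : (T2.card : ℤ) = (T.card : ℤ) - 1 := by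
            have := hT2card; push_cast [← this]; ring
          rw [ht2] at IH
          have ecast : (esum G T : ℤ) = (esum G T2 : ℤ) + 2 * dbar G T u := by
            rw [e1]; push_cast; ring
          rw [ecast, hsum]
          nlinarith [IH, hineq]
        · exfalso
          push_neg at hC1 hC2 hC3
          have hss : univ \ T ⊂ univ := by
            apply Finset.sdiff_ssubset (Finset.subset_univ T) hTne
          obtain ⟨φ0, hφ0m, hφ0p⟩ := hcrit.2 _ hss
          set K : V → Finset ℕ :=
            fun v => (L v) \ ((G.neighborFinset v \ T).image φ0) with hKdef
          have hKL : ∀ v, K v ⊆ L v := fun v => Finset.sdiff_subset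
          have hKcard : ∀ v ∈ T, (T.card : ℤ) - dbar G T v - sv v ≤ ((K v).card : ℤ) := by
            intro v hv
            have h1 : (L v).card ≤ (K v).card + ((G.neighborFinset v \ T).image φ0).card :=
              Finset.card_le_card_sdiff_add_card
            have h2 : ((G.neighborFinset v \ T).image φ0).card
                ≤ (G.neighborFinset v \ T).card := Finset.card_image_le
            have h3 : (G.neighborFinset v \ T).card + (G.neighborFinset v ∩ T).card
                = (G.neighborFinset v).card := Finset.card_sdiff_add_card_inter _ _
            have h4 : G.neighborFinset v ∩ T = (T.erase v).filter (fun u => G.Adj v u) := by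
              ext u
              simp only [Finset.mem_inter, SimpleGraph.mem_neighborFinset, Finset.mem_filter,
                Finset.mem_erase]
              constructor
              · rintro ⟨ha, hu⟩; exact ⟨⟨(G.ne_of_adj ha).symm, hu⟩, ha⟩
              · rintro ⟨⟨_, hu⟩, ha⟩; exact ⟨ha, hu⟩
            have h5 : ((T.erase v).filter (fun u => G.Adj v u)).card + dbar G T v
                = (T.erase v).card := by
              unfold dbar
              exact Finset.card_filter_add_card_filter_not _
            have h6 : (T.erase v).card + 1 = T.card := by
              rw [Finset.card_erase_of_mem hv]
              have : 1 ≤ T.card := Finset.card_pos.mpr ⟨v, hv⟩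
              omega
            have h7 : (G.neighborFinset v).card = G.degree v := G.card_neighborFinset_eq_degree v
            rw [h4] at h3
            simp only [hsv]
            push_cast
            omega
          have hk1 : ∀ p ∈ PP, PP.card + 1 ≤ (K p.1).card ∧ PP.card + 1 ≤ (K p.2).card := by
            intro p hp
            obtain ⟨hxT, hyT, _, _⟩ := hPP1 p hp
            have ha := hC2 p hp p (Or.inl rfl)
            have hb := hC2 p hp (p.2, p.1) (Or.inr rfl)
            have hca := hKcard p.1 hxT
            have hcb := hKcard p.2 hyT
            constructor
            · have : (PP.card : ℤ) + 1 ≤ ((K p.1).card : ℤ) := by linarith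
              exact_mod_cast this
            · have : (PP.card : ℤ) + 1 ≤ ((K p.2).card : ℤ) := by
                simp only at hb
                linarith
              exact_mod_cast this
          have hk2 : ∀ p ∈ PP, T.card + 1 ≤ (K p.1).card + (K p.2).card := by
            intro p hp
            obtain ⟨hxT, hyT, _, _⟩ := hPP1 p hp
            have ha := hC1 p hp
            have hca := hKcard p.1 hxT
            have hcb := hKcard p.2 hyT
            have : (T.card : ℤ) + 1 ≤ ((K p.1).card : ℤ) + ((K p.2).card : ℤ) := by linarith
            exact_mod_cast this
          have hk3 : ∀ u ∈ T, (∀ p ∈ PP, u ≠ p.1 ∧ u ≠ p.2) →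
              T.card + 1 ≤ (K u).card + PP.card := by
            intro u hu hum
            have ha := hC3 u hu hum
            have hca := hKcard u hu
            have : (T.card : ℤ) + 1 ≤ ((K u).card : ℤ) + (PP.card : ℤ) := by linarith
            exact_mod_cast this
          obtain ⟨ψ, hψm, hψp⟩ := pureLemma G T.card T PP K le_rfl hPP1 hPP2 hk1 hk2 hk3
          apply hcrit.1
          refine ⟨fun v => if v ∈ T then ψ v else φ0 v, ?_, ?_⟩
          · intro v _
            by_cases h : v ∈ T
            · simp only [if_pos h]
              exact hKL v (hψm v h)
            · simp only [if_neg h]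
              exact hφ0m v (Finset.mem_sdiff.mpr ⟨Finset.mem_univ v, h⟩)
          · intro u _ v _ hadj
            by_cases h1 : u ∈ T <;> by_cases h2 : v ∈ T
            · simp only [if_pos h1, if_pos h2]
              exact hψp u h1 v h2 hadj
            · simp only [if_pos h1, if_neg h2]
              have hmem : φ0 v ∈ (G.neighborFinset u \ T).image φ0 :=
                Finset.mem_image_of_mem _
                  (Finset.mem_sdiff.mpr ⟨(G.mem_neighborFinset u v).mpr hadj, h2⟩)
              have h3 := hψm u h1
              rw [hKdef] at h3
              intro heq
              exact (Finset.mem_sdiff.mp h3).2 (heq ▸ hmem)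
            · simp only [if_neg h1, if_pos h2]
              have hmem : φ0 u ∈ (G.neighborFinset v \ T).image φ0 :=
                Finset.mem_image_of_mem _
                  (Finset.mem_sdiff.mpr ⟨(G.mem_neighborFinset v u).mpr (G.adj_symm hadj), h1⟩)
              have h3 := hψm v h2
              rw [hKdef] at h3
              intro heq
              exact (Finset.mem_sdiff.mp h3).2 (heq ▸ hmem)
            · simp only [if_neg h1, if_neg h2]
              exact hφ0p u (Finset.mem_sdiff.mpr ⟨Finset.mem_univ u, h1⟩)
                v (Finset.mem_sdiff.mpr ⟨Finset.mem_univ v, h2⟩) hadj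

end Aux

theorem stmt_1 {V : Type*} [Fintype V] [DecidableEq V] (G : SimpleGraph V)
    [DecidableRel G.Adj] (L : V → Finset ℕ) (hLne : ∀ v, (L v).Nonempty)
    -- G is L-critical:
    (hcrit : ¬ ColorableOn G L univ ∧ ∀ S : Finset V, S ⊂ univ → ColorableOn G L S)
    -- H = G[S] is an induced subgraph of G:
    (S : Finset V)
    -- M is a matching in the complement of H:
    (M : SimpleGraph V)
    (hMsub : ∀ u v, M.Adj u v → u ∈ S ∧ v ∈ S ∧ ¬ G.Adj u v)
    (hmatch : ∀ a b c, M.Adj a b → M.Adj a c → b = c) :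
    (Nat.card (G.induce (S : Set V))ᶜ.edgeSet : ℤ) ≥
      (Nat.card M.edgeSet : ℤ) * ((S.card : ℤ) - Nat.card M.edgeSet) -
        ∑ u ∈ S, ((G.degree u : ℤ) + 1 - (L u).card) := by
  classical
  haveI : DecidableRel M.Adj := Classical.decRel _
  set PP : Finset (V × V) := M.edgeFinset.image Quot.out with hPPdef
  have houtinj : Function.Injective (Quot.out : Sym2 V → V × V) := fun a b h => by
    rw [← Quot.out_eq a, ← Quot.out_eq b, h]
  have hPPcard : PP.card = M.edgeFinset.card := Finset.card_image_of_injective _ houtinj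
  have hadj_of_mem : ∀ p ∈ PP, M.Adj p.1 p.2 := by
    intro p hp
    obtain ⟨e, he, hout⟩ := Finset.mem_image.mp hp
    have he' : e ∈ M.edgeSet := SimpleGraph.mem_edgeFinset.mp he
    rw [← SimpleGraph.mem_edgeSet]
    have h : s(p.1, p.2) = e := by rw [← hout]; exact Quot.out_eq e
    rw [h]; exact he'
  have hout_of_mem : ∀ p ∈ PP, (Sym2.mk p.1 p.2).out = p := by
    intro p hp
    obtain ⟨e, he, hout⟩ := Finset.mem_image.mp hp
    rw [← hout]
    exact congrArg Quot.out (Quot.out_eq e)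
  have hPP1 : ∀ p ∈ PP, p.1 ∈ S ∧ p.2 ∈ S ∧ ¬ G.Adj p.1 p.2 ∧ p.1 ≠ p.2 := by
    intro p hp
    have h := hadj_of_mem p hp
    obtain ⟨h1, h2, h3⟩ := hMsub _ _ h
    exact ⟨h1, h2, h3, h.ne⟩
  have hPP2 : ∀ p ∈ PP, ∀ q ∈ PP, p ≠ q →
      p.1 ≠ q.1 ∧ p.1 ≠ q.2 ∧ p.2 ≠ q.1 ∧ p.2 ≠ q.2 := by
    intro p hp q hq hpq
    have hpa := hadj_of_mem p hp
    have hqa := hadj_of_mem q hq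
    have hswap : ¬ (p.1 = q.2 ∧ p.2 = q.1) := by
      rintro ⟨h1, h2⟩
      have hmk : Sym2.mk p.1 p.2 = Sym2.mk q.1 q.2 := by
        rw [h1, h2]
        exact Sym2.eq_swap
      have hh := hout_of_mem p hp
      rw [hmk, hout_of_mem q hq] at hh
      exact hpq hh.symm
    refine ⟨?_, ?_, ?_, ?_⟩
    · intro h
      exact hpq (Prod.ext h (hmatch p.1 p.2 q.2 hpa (by rw [h]; exact hqa)))
    · intro h
      exact hswap ⟨h, hmatch p.1 p.2 q.1 hpa (by rw [h]; exact hqa.symm)⟩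
    · intro h
      exact hswap ⟨(hmatch q.1 q.2 p.1 hqa (by rw [← h]; exact hpa.symm)).symm, h⟩
    · intro h
      exact hpq (Prod.ext (hmatch p.2 p.1 q.1 hpa.symm (by rw [h]; exact hqa.symm)) h)
  have hmain := mainLemma G L hcrit S.card S PP le_rfl hPP1 hPP2
  set Hc := (G.induce (S : Set V))ᶜ with hHcdef
  haveI : DecidableRel Hc.Adj := by rw [hHcdef]; infer_instance
  have hdeg : ∀ x : ↥(S : Set V), Hc.degree x = dbar G S (x : V) := by
    intro x
    rw [← SimpleGraph.card_neighborFinset_eq_degree]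
    apply Finset.card_bij (fun (u : ↥(S : Set V)) _ => (u : V))
    · intro u hu
      rw [SimpleGraph.mem_neighborFinset, hHcdef, SimpleGraph.compl_adj] at hu
      obtain ⟨hne, hnadj⟩ := hu
      refine Finset.mem_filter.mpr ⟨Finset.mem_erase.mpr ⟨?_, ?_⟩, ?_⟩
      · exact fun h => hne (Subtype.ext h.symm)
      · exact u.2
      · exact fun h => hnadj h
    · intro a _ b _ h
      exact Subtype.ext h
    · intro v hv
      obtain ⟨hv1, hv2⟩ := Finset.mem_filter.mp hv
      obtain ⟨hvne, hvS⟩ := Finset.mem_erase.mp hv1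
      refine ⟨⟨v, hvS⟩, ?_, rfl⟩
      rw [SimpleGraph.mem_neighborFinset, hHcdef, SimpleGraph.compl_adj]
      exact ⟨fun h => hvne (congrArg Subtype.val h).symm, fun h => hv2 h⟩
  have hsum2 : ∑ x : ↥(S : Set V), dbar G S (x : V) = esum G S := by
    unfold esum
    apply Finset.sum_bij (fun (x : ↥(S : Set V)) _ => (x : V))
    · intro x _; exact x.2
    · intro a _ b _ h; exact Subtype.ext h
    · intro v hv; exact ⟨⟨v, hv⟩, Finset.mem_univ _, rfl⟩
    · intro a _; rfl
  have htwice := SimpleGraph.sum_degrees_eq_twice_card_edges Hc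
  have hLHS : 2 * Hc.edgeFinset.card = esum G S := by
    rw [← htwice, ← hsum2]
    exact Finset.sum_congr rfl (fun x _ => hdeg x)
  have hcardL : Nat.card Hc.edgeSet = Hc.edgeFinset.card := by
    simp [SimpleGraph.edgeFinset, Nat.card_eq_fintype_card, Set.toFinset_card]
  have hcardM : Nat.card M.edgeSet = PP.card := by
    rw [hPPcard]
    simp [SimpleGraph.edgeFinset, Nat.card_eq_fintype_card, Set.toFinset_card]
  rw [ge_iff_le, hcardM]
  have h2 : (2 : ℤ) * (Nat.card Hc.edgeSet : ℤ) = (esum G S : ℤ) := by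
    rw [hcardL]
    exact_mod_cast congrArg (Nat.cast : ℕ → ℤ) hLHS
  linarith [hmain]
end

section
/- Let G be a graph with list-assignment L, let v be a vertex, let Egal(v) be a subset of its neighborhood, and let NotEgal(v) = N(v) \ Egal(v). Suppose M is a maximum matching in the complement of the induced subgraph G[Egal(v)]. Let ω(v) denote the size of the largest clique of G containing v and Gap(v) = d(v) + 1 − ω(v). Then (Gap(v) − |NotEgal(v)|)/2 ≤ |M| ≤ Gap(v). -/
open SimpleGraph Finset

/-- `omegaAt G v` is the size of a largest clique of `G` containing `v`. -/
noncomputable def omegaAt {V : Type*} [Fintype V] (G : SimpleGraph V) (v : V) : ℕ :=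
  sSup {n | ∃ s : Finset V, G.IsNClique n s ∧ v ∈ s}

theorem stmt_4 {V : Type*} [Fintype V] [DecidableEq V] (G : SimpleGraph V)
    [DecidableRel G.Adj] (v : V) (Egal : Finset V) (hE : Egal ⊆ G.neighborFinset v)
    -- M is a matching in the complement of G[Egal(v)]:
    (M : SimpleGraph V)
    (hMsub : ∀ a b, M.Adj a b → a ∈ Egal ∧ b ∈ Egal ∧ ¬ G.Adj a b)
    (hmatch : ∀ a b c, M.Adj a b → M.Adj a c → b = c)
    -- M is maximum among such matchings:
    (hmax : ∀ M' : SimpleGraph V,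
      (∀ a b, M'.Adj a b → a ∈ Egal ∧ b ∈ Egal ∧ ¬ G.Adj a b) →
      (∀ a b c, M'.Adj a b → M'.Adj a c → b = c) →
      Nat.card M'.edgeSet ≤ Nat.card M.edgeSet) :
    (((G.degree v : ℝ) + 1 - omegaAt G v) - ((G.neighborFinset v \ Egal).card : ℝ)) / 2 ≤
        (Nat.card M.edgeSet : ℝ) ∧
      (Nat.card M.edgeSet : ℝ) ≤ (G.degree v : ℝ) + 1 - omegaAt G v := by
  classical
  set N := G.neighborFinset v with hN
  -- boundedness and nonemptiness of the clique-size set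
  have hbdd : BddAbove {n | ∃ s : Finset V, G.IsNClique n s ∧ v ∈ s} := by
    refine ⟨Fintype.card V, ?_⟩
    rintro n ⟨s, hs, -⟩
    exact hs.2 ▸ s.card_le_univ
  have hone : 1 ∈ {n | ∃ s : Finset V, G.IsNClique n s ∧ v ∈ s} := by
    refine ⟨{v}, ?_, mem_singleton_self v⟩
    constructor
    · simp [Set.Pairwise, SimpleGraph.IsClique]
    · simp
  have hωmem : omegaAt G v ∈ {n | ∃ s : Finset V, G.IsNClique n s ∧ v ∈ s} :=
    Nat.sSup_mem ⟨1, hone⟩ hbdd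
  obtain ⟨K, hK, hvK⟩ := hωmem
  -- edge finset of M
  have hfin : M.edgeSet.Finite := Set.toFinite _
  set E : Finset (Sym2 V) := hfin.toFinset with hEdef
  have hm : Nat.card M.edgeSet = E.card := by
    rw [Nat.card_coe_set_eq, Set.ncard_eq_toFinset_card _ hfin]
  have hmemE : ∀ e, e ∈ E ↔ e ∈ M.edgeSet := fun e => hfin.mem_toFinset
  -- endpoints of a Sym2
  set eps : Sym2 V → Finset V :=
    Sym2.lift ⟨fun a b => ({a, b} : Finset V), fun a b => by
      simp [Finset.pair_comm]⟩ with hepsdef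
  have heps : ∀ a b : V, eps s(a, b) = {a, b} := fun a b => rfl
  have hepscard : ∀ e : Sym2 V, (eps e).card ≤ 2 := by
    intro e
    induction e using Sym2.ind with
    | _ a b => rw [heps]; exact (Finset.card_insert_le a {b}).trans (by simp)
  -- covered vertices
  set C : Finset V := univ.filter (fun x => ∃ y, M.Adj x y) with hCdef
  have hCmem : ∀ x, x ∈ C ↔ ∃ y, M.Adj x y := by intro x; simp [hCdef]
  have hCcard : C.card ≤ 2 * E.card := by
    have hsub : C ⊆ E.biUnion eps := by
      intro x hx
      obtain ⟨y, hy⟩ := (hCmem x).1 hx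
      refine Finset.mem_biUnion.2 ⟨s(x, y), ?_, ?_⟩
      · exact (hmemE _).2 hy
      · rw [heps]; simp
    calc C.card ≤ (E.biUnion eps).card := Finset.card_le_card hsub
      _ ≤ ∑ e ∈ E, (eps e).card := Finset.card_biUnion_le
      _ ≤ ∑ _e ∈ E, 2 := Finset.sum_le_sum fun e _ => hepscard e
      _ = 2 * E.card := by rw [Finset.sum_const, smul_eq_mul, mul_comm]
  -- uncovered vertices of Egal form a clique
  set U : Finset V := Egal \ C with hUdef
  have hUadj : ∀ a ∈ U, ∀ b ∈ U, a ≠ b → G.Adj a b := by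
    intro a ha b hb hab
    by_contra hnadj
    have haE : a ∈ Egal := (Finset.mem_sdiff.1 ha).1
    have hbE : b ∈ Egal := (Finset.mem_sdiff.1 hb).1
    have haC : ¬∃ y, M.Adj a y := fun h => (Finset.mem_sdiff.1 ha).2 ((hCmem a).2 h)
    have hbC : ¬∃ y, M.Adj b y := fun h => (Finset.mem_sdiff.1 hb).2 ((hCmem b).2 h)
    set M' : SimpleGraph V := M ⊔ SimpleGraph.fromEdgeSet {s(a, b)} with hM'def
    have hM'adj : ∀ x y, M'.Adj x y ↔ M.Adj x y ∨ ((x = a ∧ y = b) ∨ (x = b ∧ y = a)) := by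
      intro x y
      constructor
      · rintro (h | h)
        · exact Or.inl h
        · rw [SimpleGraph.fromEdgeSet_adj] at h
          have := Set.mem_singleton_iff.1 h.1
          rw [Sym2.eq_iff] at this
          exact Or.inr this
      · rintro (h | (⟨rfl, rfl⟩ | ⟨rfl, rfl⟩))
        · exact Or.inl h
        · refine Or.inr ?_
          rw [SimpleGraph.fromEdgeSet_adj]
          exact ⟨rfl, hab⟩
        · refine Or.inr ?_
          rw [SimpleGraph.fromEdgeSet_adj]
          exact ⟨by rw [Sym2.eq_swap]; rfl, hab.symm⟩
    have hsub' : ∀ x y, M'.Adj x y → x ∈ Egal ∧ y ∈ Egal ∧ ¬ G.Adj x y := by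
      intro x y hxy
      rcases (hM'adj x y).1 hxy with h | (⟨rfl, rfl⟩ | ⟨rfl, rfl⟩)
      · exact hMsub x y h
      · exact ⟨haE, hbE, hnadj⟩
      · exact ⟨hbE, haE, fun h => hnadj h.symm⟩
    have hmatch' : ∀ x y z, M'.Adj x y → M'.Adj x z → y = z := by
      intro x y z hxy hxz
      rcases (hM'adj x y).1 hxy with h1 | (⟨rfl, rfl⟩ | ⟨rfl, rfl⟩) <;>
        rcases (hM'adj x z).1 hxz with h2 | (⟨h2a, rfl⟩ | ⟨h2a, rfl⟩)
      · exact hmatch x y z h1 h2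
      · exact absurd ⟨y, h2a ▸ h1⟩ haC
      · exact absurd ⟨y, h2a ▸ h1⟩ hbC
      · exact absurd ⟨z, h2⟩ haC
      · rfl
      · exact absurd h2a hab
      · exact absurd ⟨z, h2⟩ hbC
      · exact absurd h2a hab.symm
      · rfl
    have hle := hmax M' hsub' hmatch'
    have habM : s(a, b) ∉ M.edgeSet := by
      rw [SimpleGraph.mem_edgeSet]; exact fun h => haC ⟨b, h⟩
    have hES : M'.edgeSet = insert s(a, b) M.edgeSet := by
      rw [hM'def, SimpleGraph.edgeSet_sup, SimpleGraph.edgeSet_fromEdgeSet]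
      ext e
      simp only [Set.mem_union, Set.mem_diff, Set.mem_singleton_iff, Set.mem_insert_iff,
        Set.mem_setOf_eq]
      constructor
      · rintro (h | ⟨rfl, -⟩)
        · exact Or.inr h
        · exact Or.inl rfl
      · rintro (rfl | h)
        · exact Or.inr ⟨rfl, by simp [Sym2.isDiag_iff_proj_eq, hab]⟩
        · exact Or.inl h
    have hcard' : Nat.card M'.edgeSet = Nat.card M.edgeSet + 1 := by
      rw [hES, Nat.card_coe_set_eq, Nat.card_coe_set_eq,
        Set.ncard_insert_of_notMem habM (Set.toFinite _)]
    omega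
  have hvU : v ∉ U := by
    intro hv
    have : v ∈ N := hE (Finset.mem_sdiff.1 hv).1
    rw [hN, SimpleGraph.mem_neighborFinset] at this
    exact G.irrefl this
  have hclique : G.IsNClique (U.card + 1) (insert v U) := by
    constructor
    · intro x hx y hy hxy
      simp only [Finset.coe_insert, Set.mem_insert_iff, Finset.mem_coe] at hx hy
      rcases hx with rfl | hx <;> rcases hy with rfl | hy
      · exact absurd rfl hxy
      · have : y ∈ N := hE (Finset.mem_sdiff.1 hy).1
        rwa [hN, SimpleGraph.mem_neighborFinset] at this
      · have : x ∈ N := hE (Finset.mem_sdiff.1 hx).1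
        rw [hN, SimpleGraph.mem_neighborFinset] at this
        exact this.symm
      · exact hUadj x hx y hy hxy
    · rw [Finset.card_insert_of_notMem hvU]
  have hωge : U.card + 1 ≤ omegaAt G v :=
    le_csSup hbdd ⟨insert v U, hclique, Finset.mem_insert_self v U⟩
  -- lower bound (ℕ form): degree + 1 ≤ ω + |N \ Egal| + 2 * |E|
  have hdeg : (N \ Egal).card + Egal.card = N.card := Finset.card_sdiff_add_card_eq_card hE
  have hdN : G.degree v = N.card := (G.card_neighborFinset_eq_degree v).symm
  have hEgalle : Egal.card ≤ U.card + C.card := Finset.card_le_card_sdiff_add_card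
  have hlow : G.degree v + 1 ≤ omegaAt G v + (N \ Egal).card + 2 * E.card := by omega
  -- upper bound: |E| ≤ |N \ K|
  have hQ : ∀ e ∈ E, ∃ x ∈ eps e, x ∈ N \ K := by
    intro e he
    induction e using Sym2.ind with
    | _ a b =>
      have hab : M.Adj a b := by
        have := (hmemE _).1 he
        rwa [SimpleGraph.mem_edgeSet] at this
      obtain ⟨haE, hbE, hnadj⟩ := hMsub a b hab
      have hane : a ≠ b := M.ne_of_adj hab
      have : a ∉ K ∨ b ∉ K := by
        by_contra h
        push_neg at h
        exact hnadj (hK.1 h.1 h.2 hane)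
      rcases this with h | h
      · exact ⟨a, by rw [heps]; simp, Finset.mem_sdiff.2 ⟨hE haE, h⟩⟩
      · exact ⟨b, by rw [heps]; simp, Finset.mem_sdiff.2 ⟨hE hbE, h⟩⟩
  set f : Sym2 V → V := fun e => if h : ∃ x ∈ eps e, x ∈ N \ K then h.choose else v with hfdef
  have hf1 : ∀ e ∈ E, f e ∈ eps e ∧ f e ∈ N \ K := by
    intro e he
    have h := hQ e he
    rw [hfdef]
    simp only [dif_pos h]
    exact ⟨h.choose_spec.1, h.choose_spec.2⟩
  have hfkey : ∀ e ∈ E, ∃ y, M.Adj (f e) y ∧ e = s(f e, y) := by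
    intro e he
    have hfe := (hf1 e he).1
    have hadj : e ∈ M.edgeSet := (hmemE _).1 he
    induction e using Sym2.ind with
    | _ a b =>
      rw [heps] at hfe
      rw [SimpleGraph.mem_edgeSet] at hadj
      rcases Finset.mem_insert.1 hfe with h | h
      · exact ⟨b, by rw [h]; exact hadj, by rw [h]⟩
      · rw [Finset.mem_singleton] at h
        exact ⟨a, by rw [h]; exact hadj.symm, by rw [h]; exact Sym2.eq_swap⟩
  have hEcard : E.card ≤ (N \ K).card := by
    apply Finset.card_le_card_of_injOn f (fun e he => (hf1 e he).2)
    intro e1 he1 e2 he2 hfe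
    obtain ⟨y1, hy1, he1'⟩ := hfkey e1 he1
    obtain ⟨y2, hy2, he2'⟩ := hfkey e2 he2
    rw [hfe] at hy1 he1'
    rw [hmatch (f e2) y1 y2 hy1 hy2] at he1'
    exact he1'.trans he2'.symm
  have hNK : (N \ K).card + (N ∩ K).card = N.card := Finset.card_sdiff_add_card_inter N K
  have hNKer : N ∩ K = K.erase v := by
    ext x
    simp only [Finset.mem_inter, Finset.mem_erase]
    constructor
    · rintro ⟨hx1, hx2⟩
      refine ⟨?_, hx2⟩
      rintro rfl
      rw [hN, SimpleGraph.mem_neighborFinset] at hx1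
      exact G.irrefl hx1
    · rintro ⟨hx1, hx2⟩
      refine ⟨?_, hx2⟩
      rw [hN, SimpleGraph.mem_neighborFinset]
      exact (hK.1 (by exact_mod_cast hvK) (by exact_mod_cast hx2) (Ne.symm hx1))
  have hKer : (K.erase v).card + 1 = omegaAt G v := by
    rw [Finset.card_erase_add_one hvK, hK.2]
  have hup : E.card + omegaAt G v ≤ G.degree v + 1 := by
    rw [← hKer, ← hNKer]; omega
  -- assemble
  rw [hm]
  constructor
  · rw [div_le_iff₀ (by norm_num : (0:ℝ) < 2)]
    have h := (Nat.cast_le (α := ℝ)).2 hlow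
    push_cast at h ⊢
    linarith
  · have h := (Nat.cast_le (α := ℝ)).2 hup
    push_cast at h ⊢
    linarith
end

section
/- For every 1 ≥ α > ε > 0 and every finite graph H with average degree ad(H) ≤ (1+ε)δ(H), where δ(H) is the minimum degree, there exists a nonempty induced subgraph H' of H such that every vertex v ∈ V(H') satisfies d_{H'}(v) ≥ ((1−α)/2)·δ(H) and d_H(v) ≤ (1 + ((1+α)/(α−ε))·ε)·δ(H). -/
open SimpleGraph Finset

/-- Removing a vertex from `S` decreases the internal degree sum by twice that
vertex's internal degree. -/
lemma e2_erase {V : Type*} [Fintype V] [DecidableEq V] (H : SimpleGraph V)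
    [DecidableRel H.Adj] (S : Finset V) (v : V) (hv : v ∈ S) :
    ∑ u ∈ S, (S.filter (H.Adj u)).card =
      (∑ u ∈ S.erase v, ((S.erase v).filter (H.Adj u)).card) +
        2 * (S.filter (H.Adj v)).card := by
  rw [← Finset.add_sum_erase _ _ hv]
  have key : ∀ u ∈ S.erase v, (S.filter (H.Adj u)).card
      = ((S.erase v).filter (H.Adj u)).card + (if H.Adj u v then 1 else 0) := by
    intro u hu
    have hrw : (S.erase v).filter (H.Adj u) = (S.filter (H.Adj u)).erase v := by
      ext x
      simp only [Finset.mem_erase, Finset.mem_filter]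
      tauto
    rw [hrw]
    by_cases h : H.Adj u v
    · rw [if_pos h, Finset.card_erase_of_mem (by simp [Finset.mem_filter, hv, h])]
      have hpos : 0 < (S.filter (H.Adj u)).card :=
        Finset.card_pos.2 ⟨v, by simp [Finset.mem_filter, hv, h]⟩
      omega
    · rw [if_neg h, Finset.erase_eq_of_notMem (by simp [h])]
      omega
  rw [Finset.sum_congr rfl key, Finset.sum_add_distrib]
  have hlast : ∑ u ∈ S.erase v, (if H.Adj u v then 1 else 0) = (S.filter (H.Adj v)).card := by
    rw [← Finset.card_filter]
    congr 1
    ext x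
    simp only [Finset.mem_filter, Finset.mem_erase]
    constructor
    · rintro ⟨⟨hxv, hxS⟩, hadj⟩
      exact ⟨hxS, hadj.symm⟩
    · rintro ⟨hxS, hadj⟩
      exact ⟨⟨hadj.ne', hxS⟩, hadj.symm⟩
  rw [hlast]
  omega

/-- Bipartite double counting of edges between two sets. -/
lemma sum_swap_adj {V : Type*} [Fintype V] [DecidableEq V] (H : SimpleGraph V)
    [DecidableRel H.Adj] (A B : Finset V) :
    ∑ v ∈ A, (B.filter (H.Adj v)).card = ∑ u ∈ B, (A.filter (H.Adj u)).card := by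
  simp only [Finset.card_filter]
  rw [Finset.sum_comm]
  refine Finset.sum_congr rfl fun u _ => Finset.sum_congr rfl fun v _ => ?_
  exact if_congr (H.adj_comm v u) rfl rfl

theorem stmt_6 {V : Type*} [Fintype V] [DecidableEq V] [Nonempty V]
    (H : SimpleGraph V) [DecidableRel H.Adj] (α ε : ℝ)
    (hα1 : α ≤ 1) (hεα : ε < α) (hε : 0 < ε)
    (had : (2 * H.edgeFinset.card : ℝ) / (Fintype.card V : ℝ) ≤
      (1 + ε) * (H.minDegree : ℝ)) :
    ∃ S : Finset V, S.Nonempty ∧ ∀ v ∈ S,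
      ((1 - α) / 2) * (H.minDegree : ℝ) ≤ ((S.filter (H.Adj v)).card : ℝ) ∧
      (H.degree v : ℝ) ≤ (1 + ((1 + α) / (α - ε)) * ε) * (H.minDegree : ℝ) := by
  have hαε : 0 < α - ε := by linarith
  have hα0 : 0 < α := lt_trans hε hεα
  by_cases hδ0 : H.minDegree = 0
  · obtain ⟨v, hv⟩ := H.exists_minimal_degree_vertex
    refine ⟨{v}, Finset.singleton_nonempty v, ?_⟩
    intro u hu
    rw [Finset.mem_singleton] at hu
    subst hu
    rw [← hv, hδ0]
    constructor
    · simp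
    · simp
  -- main case
  set δr : ℝ := (H.minDegree : ℝ) with hδrdef
  have hδr : 0 < δr := by
    have h1 : 1 ≤ H.minDegree := Nat.one_le_iff_ne_zero.2 hδ0
    have h2 : (1:ℝ) ≤ δr := by rw [hδrdef]; exact_mod_cast h1
    linarith
  set C : ℝ := (1 + α) / (α - ε) with hCdef
  have hC : 0 < C := div_pos (by linarith) hαε
  set K : ℝ := 1 + C * ε with hKdef
  have hK1 : 1 ≤ K := by nlinarith
  set n : ℕ := Fintype.card V with hndef
  have hn : 0 < (n : ℝ) := by
    have : 0 < n := Fintype.card_pos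
    exact_mod_cast this
  -- total degree sum bound
  have hsum : (∑ v, (H.degree v : ℝ)) ≤ (1 + ε) * δr * n := by
    rw [div_le_iff₀ hn] at had
    have h2 : (∑ v, H.degree v) = 2 * H.edgeFinset.card :=
      H.sum_degrees_eq_twice_card_edges
    have : ((∑ v, H.degree v : ℕ) : ℝ) = 2 * (H.edgeFinset.card : ℝ) := by
      rw [h2]; push_cast; ring
    push_cast at this ⊢
    rw [this]
    nlinarith [had]
  set good := univ.filter (fun v => (H.degree v : ℝ) ≤ K * δr) with hgooddef
  set B : Finset V := univ \ good with hBdef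
  have hcard : good.card + B.card = n := by
    have h := Finset.card_sdiff_add_card_eq_card (Finset.subset_univ good)
    rw [← hBdef] at h
    rw [hndef, ← Finset.card_univ]
    omega
  have hsplit : (∑ v ∈ B, (H.degree v : ℝ)) + (∑ v ∈ good, (H.degree v : ℝ))
      = ∑ v, (H.degree v : ℝ) := Finset.sum_sdiff (Finset.subset_univ good)
  have hmindeg : ∀ v : V, δr ≤ (H.degree v : ℝ) := by
    intro v
    rw [hδrdef]
    exact_mod_cast H.minDegree_le_degree v
  have hgood_lb : δr * good.card ≤ ∑ v ∈ good, (H.degree v : ℝ) := by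
    calc δr * good.card = ∑ _v ∈ good, δr := by rw [Finset.sum_const, nsmul_eq_mul]; ring
    _ ≤ ∑ v ∈ good, (H.degree v : ℝ) := Finset.sum_le_sum fun v _ => hmindeg v
  have hB_lb : ∀ v ∈ B, K * δr < (H.degree v : ℝ) := by
    intro v hvB
    rw [hBdef, Finset.mem_sdiff, hgooddef, Finset.mem_filter] at hvB
    push_neg at hvB
    exact hvB.2 (Finset.mem_univ v)
  -- bound on the number of bad vertices
  have hb : (1 + α) * B.card < (α - ε) * n := by
    rcases B.eq_empty_or_nonempty with hBe | hBne
    · rw [hBe]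
      simp only [Finset.card_empty, Nat.cast_zero, mul_zero]
      positivity
    · have hBsum : K * δr * B.card < ∑ v ∈ B, (H.degree v : ℝ) := by
        calc K * δr * B.card = ∑ _v ∈ B, K * δr := by rw [Finset.sum_const, nsmul_eq_mul]; ring
        _ < ∑ v ∈ B, (H.degree v : ℝ) := Finset.sum_lt_sum_of_nonempty hBne hB_lb
      have hBup : (∑ v ∈ B, (H.degree v : ℝ)) ≤ (1 + ε) * δr * n - δr * good.card := by
        linarith
      have hcardR : (good.card : ℝ) + B.card = n := by exact_mod_cast hcard
      -- K δ b < (1+ε)δn - δ(n - b)  ⇒  C ε δ b < ε δ n  ⇒  C b < n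
      have h1 : C * B.card * (ε * δr) < (n : ℝ) * (ε * δr) := by
        rw [hKdef] at hBsum
        nlinarith
      have h2 : C * B.card < (n : ℝ) :=
        lt_of_mul_lt_mul_right h1 (by positivity)
      have h3 : C * (α - ε) = 1 + α := div_mul_cancel₀ _ (ne_of_gt hαε)
      nlinarith
  -- lower bound on the internal degree sum of good
  set e2 : ℝ := ∑ v ∈ good, ((good.filter (H.Adj v)).card : ℝ) with he2def
  have hdegsplit : ∀ v : V, (good.filter (H.Adj v)).card + (B.filter (H.Adj v)).card
      = H.degree v := by
    intro v
    have huniv : good ∪ B = univ := Finset.union_sdiff_of_subset (Finset.subset_univ good)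
    have hdisj : Disjoint (good.filter (H.Adj v)) (B.filter (H.Adj v)) :=
      Finset.disjoint_filter_filter Finset.disjoint_sdiff
    have hdeg : H.degree v = (good.filter (H.Adj v)).card + (B.filter (H.Adj v)).card := by
      rw [← SimpleGraph.card_neighborFinset_eq_degree, neighborFinset_eq_filter, ← huniv,
        Finset.filter_union, Finset.card_union_of_disjoint hdisj]
    omega
  have hcross : (∑ v ∈ good, ((B.filter (H.Adj v)).card : ℝ))
      ≤ ∑ v ∈ B, (H.degree v : ℝ) := by
    have hswap : ∑ v ∈ good, (B.filter (H.Adj v)).card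
        = ∑ u ∈ B, (good.filter (H.Adj u)).card := sum_swap_adj H good B
    have : ∀ u ∈ B, ((good.filter (H.Adj u)).card : ℝ) ≤ (H.degree u : ℝ) := by
      intro u _
      have := hdegsplit u
      have h := (by omega : (good.filter (H.Adj u)).card ≤ H.degree u)
      exact_mod_cast h
    calc (∑ v ∈ good, ((B.filter (H.Adj v)).card : ℝ))
        = ∑ u ∈ B, ((good.filter (H.Adj u)).card : ℝ) := by exact_mod_cast congrArg Nat.cast hswap
      _ ≤ ∑ u ∈ B, (H.degree u : ℝ) := Finset.sum_le_sum this
  have he2_eq : e2 = (∑ v ∈ good, (H.degree v : ℝ))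
      - ∑ v ∈ good, ((B.filter (H.Adj v)).card : ℝ) := by
    rw [he2def, ← Finset.sum_sub_distrib]
    refine Finset.sum_congr rfl fun v _ => ?_
    have h1 := hdegsplit v
    have h2 : ((good.filter (H.Adj v)).card : ℝ) + ((B.filter (H.Adj v)).card : ℝ)
        = (H.degree v : ℝ) := by exact_mod_cast h1
    linarith
  have he2_lb : (∑ v ∈ good, (H.degree v : ℝ)) - (∑ v ∈ B, (H.degree v : ℝ)) ≤ e2 := by
    rw [he2_eq]
    linarith [hcross]
  -- f(good) > 0
  have hcardR : (good.card : ℝ) + B.card = n := by exact_mod_cast hcard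
  have hfgood : (1 - α) * δr * good.card < e2 := by
    have hnR : (n : ℝ) = (good.card : ℝ) + (B.card : ℝ) := hcardR.symm
    have h1 : 2 * (δr * good.card) - (1 + ε) * δr * ((good.card : ℝ) + B.card) ≤ e2 := by
      rw [← hnR]; linarith
    have h2 : (1 + α) * (B.card : ℝ) * δr < (α - ε) * ((good.card : ℝ) + B.card) * δr := by
      rw [← hnR]; exact mul_lt_mul_of_pos_right hb hδr
    nlinarith [h1, h2]
  -- maximize f over subsets of good
  obtain ⟨S, hSmem, hSmax⟩ := Finset.exists_max_image good.powerset
    (fun T => (∑ v ∈ T, ((T.filter (H.Adj v)).card : ℝ)) - (1 - α) * δr * T.card)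
    ⟨∅, Finset.empty_mem_powerset _⟩
  have hSsub : S ⊆ good := Finset.mem_powerset.1 hSmem
  have hfS : 0 < (∑ v ∈ S, ((S.filter (H.Adj v)).card : ℝ)) - (1 - α) * δr * S.card := by
    have h := hSmax good (Finset.mem_powerset_self good)
    calc (0 : ℝ) < e2 - (1 - α) * δr * good.card := by linarith
    _ ≤ _ := h
  have hSne : S.Nonempty := by
    rcases S.eq_empty_or_nonempty with h | h
    · rw [h] at hfS
      simp at hfS
    · exact h
  refine ⟨S, hSne, fun v hv => ?_⟩
  constructor
  · have herase : S.erase v ∈ good.powerset :=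
      Finset.mem_powerset.2 ((Finset.erase_subset v S).trans hSsub)
    have h := hSmax _ herase
    have he : ∑ u ∈ S, (S.filter (H.Adj u)).card =
        (∑ u ∈ S.erase v, ((S.erase v).filter (H.Adj u)).card) +
          2 * (S.filter (H.Adj v)).card := e2_erase H S v hv
    have he' : (∑ u ∈ S, ((S.filter (H.Adj u)).card : ℝ)) =
        (∑ u ∈ S.erase v, (((S.erase v).filter (H.Adj u)).card : ℝ)) +
          2 * ((S.filter (H.Adj v)).card : ℝ) := by exact_mod_cast congrArg Nat.cast he
    have hc : ((S.erase v).card : ℝ) = (S.card : ℝ) - 1 := by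
      rw [Finset.card_erase_of_mem hv]
      have : 1 ≤ S.card := Finset.card_pos.2 ⟨v, hv⟩
      push_cast [this]
      ring
    rw [hc, he'] at h
    linarith
  · have hvg := hSsub hv
    rw [hgooddef, Finset.mem_filter] at hvg
    exact hvg.2
end

section
/- Let v be a vertex of a graph G with list-assignment L, and let M be a maximum matching in the complement of G[Egal(v)], where Egal(v) ⊆ N(v). If u ∈ StrongEgal(v) \ V(M), where StrongEgal(v) ⊆ Egal(v) consists of vertices u with |L(u)| ≤ |L(v)| + β·Gap(v), and if |L(w)| ≥ ε·ω(w) + (1−ε)(d(w)+1) for all vertices w, G is L-critical, then Gap(u) ≤ ((2+β)Gap(v) + |NotEgal(v)|)/(1−ε), where NotEgal(v) = N(v) \ Egal(v). -/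
open SimpleGraph Finset

/-- `Gap G v = d(v) + 1 - ω(v)` as a real number. -/
noncomputable def Gap {V : Type*} [Fintype V] (G : SimpleGraph V) [DecidableRel G.Adj]
    (v : V) : ℝ :=
  (G.degree v : ℝ) + 1 - (omegaAt G v : ℝ)

lemma omegaAt_bddAbove {V : Type*} [Fintype V] (G : SimpleGraph V) (v : V) :
    BddAbove {n | ∃ s : Finset V, G.IsNClique n s ∧ v ∈ s} := by
  refine ⟨Fintype.card V, ?_⟩
  rintro m ⟨t, ht, -⟩
  rw [← ht.card_eq]
  exact t.card_le_univ.trans_eq Finset.card_univ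

lemma le_omegaAt {V : Type*} [Fintype V] (G : SimpleGraph V) {n : ℕ} {s : Finset V}
    {w : V} (h : G.IsNClique n s) (hw : w ∈ s) : n ≤ omegaAt G w :=
  le_csSup (omegaAt_bddAbove G w) ⟨s, h, hw⟩

lemma omegaAt_attained {V : Type*} [Fintype V] (G : SimpleGraph V) (w : V) :
    ∃ s : Finset V, G.IsNClique (omegaAt G w) s ∧ w ∈ s := by
  have hne : {n | ∃ s : Finset V, G.IsNClique n s ∧ w ∈ s}.Nonempty := by
    refine ⟨1, {w}, ⟨?_, by simp⟩, by simp⟩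
    simp [SimpleGraph.IsClique, Set.pairwise_singleton]
  exact Nat.sSup_mem hne (omegaAt_bddAbove G w)

/-- In an `L`-critical graph, `|L(v)| ≤ d(v)`. -/
lemma crit_list_le_degree {V : Type*} [Fintype V] [DecidableEq V] (G : SimpleGraph V)
    [DecidableRel G.Adj] (L : V → Finset ℕ)
    (hcrit : ¬ ColorableOn G L univ ∧ ∀ S : Finset V, S ⊂ univ → ColorableOn G L S)
    (v : V) : (L v).card ≤ G.degree v := by
  by_contra h
  push_neg at h
  obtain ⟨φ, hφL, hφadj⟩ := hcrit.2 (univ.erase v) (Finset.erase_ssubset (mem_univ v))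
  set C : Finset ℕ := (G.neighborFinset v).image φ with hC
  have hCcard : C.card ≤ G.degree v := Finset.card_image_le
  have : ∃ c ∈ L v, c ∉ C := by
    by_contra hc
    push_neg at hc
    have : L v ⊆ C := fun x hx => hc x hx
    have := Finset.card_le_card this
    omega
  obtain ⟨c, hcL, hcC⟩ := this
  apply hcrit.1
  refine ⟨Function.update φ v c, ?_, ?_⟩
  · intro w _
    by_cases hw : w = v
    · subst hw; simpa using hcL
    · rw [Function.update_of_ne hw]
      exact hφL w (by simp [hw])
  · intro x _ y _ hxy
    have hxyne : x ≠ y := hxy.ne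
    by_cases hx : x = v
    · subst hx
      rw [Function.update_self, Function.update_of_ne (Ne.symm hxyne)]
      intro hcontra
      exact hcC (hcontra ▸ Finset.mem_image_of_mem φ (by simpa using hxy))
    · by_cases hy : y = v
      · subst hy
        rw [Function.update_self, Function.update_of_ne hxyne]
        intro hcontra
        exact hcC (hcontra.symm ▸ Finset.mem_image_of_mem φ (by simpa using hxy.symm))
      · rw [Function.update_of_ne hx, Function.update_of_ne hy]
        exact hφadj x (by simp [hx]) y (by simp [hy]) hxy

theorem stmt_13 {V : Type*} [Fintype V] [DecidableEq V] (G : SimpleGraph V)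
    [DecidableRel G.Adj] (L : V → Finset ℕ) (hLne : ∀ v, (L v).Nonempty)
    (β ε : ℝ) (hβ : 0 < β) (hε : ε ∈ Set.Ioo (0 : ℝ) 1)
    -- G is L-critical:
    (hcrit : ¬ ColorableOn G L univ ∧ ∀ S : Finset V, S ⊂ univ → ColorableOn G L S)
    -- the list size hypothesis for all vertices:
    (hlist : ∀ w, ε * (omegaAt G w : ℝ) + (1 - ε) * ((G.degree w : ℝ) + 1) ≤
      ((L w).card : ℝ))
    (v : V) (Egal : Finset V) (hE : Egal ⊆ G.neighborFinset v)
    -- M is a matching in the complement of G[Egal(v)]: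
    (M : SimpleGraph V)
    (hMsub : ∀ a b, M.Adj a b → a ∈ Egal ∧ b ∈ Egal ∧ ¬ G.Adj a b)
    (hmatch : ∀ a b c, M.Adj a b → M.Adj a c → b = c)
    -- M is maximum among such matchings:
    (hmax : ∀ M' : SimpleGraph V,
      (∀ a b, M'.Adj a b → a ∈ Egal ∧ b ∈ Egal ∧ ¬ G.Adj a b) →
      (∀ a b c, M'.Adj a b → M'.Adj a c → b = c) →
      Nat.card M'.edgeSet ≤ Nat.card M.edgeSet)
    -- u is a strongly egalitarian neighbor of v not covered by M:
    (u : V) (huE : u ∈ Egal) (huStrong : ((L u).card : ℝ) ≤ ((L v).card : ℝ) + β * Gap G v)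
    (huM : u ∉ M.support) :
    Gap G u ≤ ((2 + β) * Gap G v + ((G.neighborFinset v \ Egal).card : ℝ)) / (1 - ε) := by
  classical
  obtain ⟨hε0, hε1⟩ := hε
  -- Step 1: Egal \ V(M) is a clique in G.
  have hclique : ∀ a ∈ Egal, ∀ b ∈ Egal, a ∉ M.support → b ∉ M.support → a ≠ b →
      G.Adj a b := by
    intro a ha b hb haM hbM hab
    by_contra hnadj
    -- build a bigger matching
    set M' : SimpleGraph V :=
      { Adj := fun x y => M.Adj x y ∨ (x = a ∧ y = b) ∨ (x = b ∧ y = a)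
        symm := by
          refine ⟨fun x y h => ?_⟩
          rcases h with h | ⟨h1, h2⟩ | ⟨h1, h2⟩
          · exact Or.inl h.symm
          · exact Or.inr (Or.inr ⟨h2, h1⟩)
          · exact Or.inr (Or.inl ⟨h2, h1⟩)
        loopless := by
          refine ⟨fun x h => ?_⟩
          rcases h with h | ⟨h1, h2⟩ | ⟨h1, h2⟩
          · exact M.loopless.irrefl x h
          · exact hab (h1.symm.trans h2)
          · exact hab (h2.symm.trans h1) } with hM'
    have hsub' : ∀ x y, M'.Adj x y → x ∈ Egal ∧ y ∈ Egal ∧ ¬ G.Adj x y := by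
      intro x y h
      rcases h with h | ⟨h1, h2⟩ | ⟨h1, h2⟩
      · exact hMsub x y h
      · subst h1; subst h2; exact ⟨ha, hb, hnadj⟩
      · subst h1; subst h2
        exact ⟨hb, ha, fun hc => hnadj hc.symm⟩
    have hmatch' : ∀ x y z, M'.Adj x y → M'.Adj x z → y = z := by
      intro x y z hxy hxz
      rcases hxy with hxy | ⟨h1, h2⟩ | ⟨h1, h2⟩ <;>
        rcases hxz with hxz | ⟨g1, g2⟩ | ⟨g1, g2⟩
      · exact hmatch x y z hxy hxz
      · exact absurd ⟨y, hxy⟩ (g1 ▸ haM)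
      · exact absurd ⟨y, hxy⟩ (g1 ▸ hbM)
      · exact absurd ⟨z, hxz⟩ (h1 ▸ haM)
      · exact h2.trans g2.symm
      · exact absurd (h1.symm.trans g1) hab
      · exact absurd ⟨z, hxz⟩ (h1 ▸ hbM)
      · exact absurd (g1.symm.trans h1) hab
      · exact h2.trans g2.symm
    have hedge : M'.edgeSet = insert s(a, b) M.edgeSet := by
      ext e
      refine Sym2.ind (fun x y => ?_) e
      simp only [SimpleGraph.mem_edgeSet, Set.mem_insert_iff, Sym2.eq_iff, hM']
      tauto
    have hnotmem : s(a, b) ∉ M.edgeSet := by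
      intro hmem
      exact haM ⟨b, hmem⟩
    have hcard : Nat.card M'.edgeSet = Nat.card M.edgeSet + 1 := by
      rw [hedge, Nat.card_coe_set_eq, Nat.card_coe_set_eq,
        Set.ncard_insert_of_notMem hnotmem (Set.toFinite _)]
    have := hmax M' hsub' hmatch'
    omega
  -- Step 2: the clique around u.
  set su : Finset V := Egal.filter (fun a => a ∉ M.support) with hsu
  have husu : u ∈ su := by exact Finset.mem_filter.2 ⟨huE, huM⟩
  have hsuclique : G.IsNClique su.card su := by
    constructor
    · intro a ha b hb hab
      simp only [hsu, Finset.coe_filter, Set.mem_setOf_eq, Finset.mem_filter] at ha hb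
      exact hclique a ha.1 b hb.1 ha.2 hb.2 hab
    · rfl
  have homu : (su.card : ℝ) ≤ (omegaAt G u : ℝ) := by
    exact_mod_cast le_omegaAt G hsuclique husu
  -- Step 3: covered vertices.
  set suppF : Finset V := Egal.filter (fun a => a ∈ M.support) with hsuppF
  have hsplit : su.card + suppF.card = Egal.card := by
    simpa only [hsu, hsuppF, not_not] using
      Finset.card_filter_add_card_filter_not
        (s := Egal) (p := fun a => a ∉ M.support)
  -- Step 4: maximum clique at v.
  obtain ⟨K, hK, hvK⟩ := omegaAt_attained G v
  have hKerase : G.neighborFinset v ∩ K = K.erase v := by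
    ext w
    simp only [Finset.mem_inter, SimpleGraph.mem_neighborFinset, Finset.mem_erase]
    constructor
    · rintro ⟨hadj, hwK⟩
      exact ⟨fun h => G.loopless.irrefl v (h ▸ hadj), hwK⟩
    · rintro ⟨hne, hwK⟩
      exact ⟨hK.1 hvK hwK (Ne.symm hne), hwK⟩
  have hKerasecard : (K.erase v).card + 1 = omegaAt G v := by
    rw [Finset.card_erase_add_one hvK, hK.2]
  -- injective partner map from suppF ∩ K into suppF \ K
  have hpartner : (suppF ∩ K).card ≤ (suppF \ K).card := by
    have hex : ∀ a ∈ suppF ∩ K, ∃ b, M.Adj a b := by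
      intro a ha
      have := (Finset.mem_inter.1 ha).1
      simp only [hsuppF, Finset.mem_filter] at this
      exact this.2
    set f : V → V := fun a => if h : ∃ b, M.Adj a b then h.choose else a with hf
    have hfadj : ∀ a ∈ suppF ∩ K, M.Adj a (f a) := by
      intro a ha
      have h := hex a ha
      simp only [hf, dif_pos h]
      exact h.choose_spec
    refine Finset.card_le_card_of_injOn f ?_ ?_
    · intro a ha
      have hadj := hfadj a ha
      have haK := (Finset.mem_inter.1 ha).2
      obtain ⟨haE, hfaE, hnadj⟩ := hMsub a (f a) hadj
      refine Finset.mem_sdiff.2 ⟨?_, ?_⟩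
      · simp only [hsuppF, Finset.mem_filter]
        exact ⟨hfaE, ⟨a, hadj.symm⟩⟩
      · intro hfaK
        have hne : a ≠ f a := hadj.ne
        exact hnadj (hK.1 haK hfaK hne)
    · intro a ha b hb hfab
      have h1 := (hfadj a ha).symm
      have h2 := (hfadj b hb).symm
      rw [hfab] at h1
      exact (hmatch (f b) a b h1 h2).symm ▸ rfl
  have hsuppFsplit : (suppF ∩ K).card + (suppF \ K).card = suppF.card := by
    rw [add_comm]
    exact Finset.card_sdiff_add_card_inter suppF K
  -- suppF \ K ⊆ N(v) \ K
  have hBsub : suppF \ K ⊆ G.neighborFinset v \ K := by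
    intro x hx
    obtain ⟨hx1, hx2⟩ := Finset.mem_sdiff.1 hx
    have : x ∈ Egal := (Finset.mem_filter.1 hx1).1
    exact Finset.mem_sdiff.2 ⟨hE this, hx2⟩
  have hNK : (G.neighborFinset v \ K).card + (K.erase v).card = G.degree v := by
    rw [← hKerase]
    exact Finset.card_sdiff_add_card_inter _ _
  have hB : ((suppF \ K).card : ℝ) ≤ (G.degree v : ℝ) + 1 - (omegaAt G v : ℝ) := by
    have h1 : (suppF \ K).card ≤ (G.neighborFinset v \ K).card :=
      Finset.card_le_card hBsub
    have h2 : ((G.neighborFinset v \ K).card : ℝ) + ((K.erase v).card : ℝ)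
        = (G.degree v : ℝ) := by exact_mod_cast hNK
    have h3 : ((K.erase v).card : ℝ) + 1 = (omegaAt G v : ℝ) := by
      exact_mod_cast hKerasecard
    have h1' : ((suppF \ K).card : ℝ) ≤ ((G.neighborFinset v \ K).card : ℝ) := by
      exact_mod_cast h1
    linarith
  -- Step 5: |Egal| in terms of degree.
  have hEgalcard : ((G.neighborFinset v \ Egal).card : ℝ) + (Egal.card : ℝ)
      = (G.degree v : ℝ) := by
    exact_mod_cast Finset.card_sdiff_add_card_eq_card hE
  -- Step 6: list size bounds.
  have hLv : ((L v).card : ℝ) ≤ (G.degree v : ℝ) := by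
    exact_mod_cast crit_list_le_degree G L hcrit v
  have hlu := hlist u
  -- put everything together
  have hsplit' : (su.card : ℝ) + (suppF.card : ℝ) = (Egal.card : ℝ) := by
    exact_mod_cast hsplit
  have hsuppFsplit' : ((suppF ∩ K).card : ℝ) + ((suppF \ K).card : ℝ)
      = (suppF.card : ℝ) := by exact_mod_cast hsuppFsplit
  have hpartner' : ((suppF ∩ K).card : ℝ) ≤ ((suppF \ K).card : ℝ) := by
    exact_mod_cast hpartner
  rw [le_div_iff₀ (by linarith : (0 : ℝ) < 1 - ε)]
  have hGapv : Gap G v = (G.degree v : ℝ) + 1 - (omegaAt G v : ℝ) := rfl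
  have hGapu : Gap G u = (G.degree u : ℝ) + 1 - (omegaAt G u : ℝ) := rfl
  nlinarith [hlu, huStrong, hLv, homu, hsplit', hsuppFsplit', hpartner', hB, hEgalcard]
end

section
/- Let X be a random variable on a finite probability space with 0 ≤ X ≤ M, let Med(X) be a median of X, and suppose that for all t > 0, P(|X − Med(X)| > t) ≤ 4·exp(−t²/(4c²r(Med(X)+t))) + 4p for constants c, r > 0 and p ∈ [0,1]. Then |E[X] − Med(X)| ≤ 48c√(r·E[X]) + 64rc² + 4Mp. -/
open MeasureTheory Set

private lemma exp_integral_Ioi' {b : ℝ} (hb : 0 < b) (a : ℝ) :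
    ∫ x in Set.Ioi a, Real.exp (-(b * x)) = Real.exp (-(b * a)) / b := by
  have h := integral_comp_mul_left_Ioi (fun x => Real.exp (-x)) a hb
  simp only [smul_eq_mul] at h
  rw [h, integral_exp_neg_Ioi]
  ring

private lemma exp_integrableOn_Ioi' {b : ℝ} (hb : 0 < b) (a : ℝ) :
    IntegrableOn (fun x : ℝ => Real.exp (-(b * x))) (Set.Ioi a) := by
  simpa [neg_mul] using exp_neg_integrableOn_Ioi a hb

private lemma exp_integral_Ioi_le {b : ℝ} (hb : 0 < b) {a : ℝ} (ha : 0 ≤ a) :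
    ∫ x in Set.Ioi a, Real.exp (-(b * x)) ≤ 1 / b := by
  rw [exp_integral_Ioi' hb a]
  gcongr
  exact Real.exp_le_one_iff.mpr (by nlinarith)

set_option maxHeartbeats 1000000 in
theorem stmt_17 {Ω : Type*} [Fintype Ω] [MeasurableSpace Ω]
    (μ : Measure Ω) [IsProbabilityMeasure μ]
    (X : Ω → ℝ) (hmeas : Measurable X) (M : ℝ)
    (h0 : ∀ ω, 0 ≤ X ω) (hM : ∀ ω, X ω ≤ M)
    -- m is a median of X:
    (m : ℝ) (hm1 : 1 / 2 ≤ (μ {ω | m ≤ X ω}).toReal)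
    (hm2 : 1 / 2 ≤ (μ {ω | X ω ≤ m}).toReal)
    (c r p : ℝ) (hc : 0 < c) (hr : 0 < r) (hp : p ∈ Set.Icc (0 : ℝ) 1)
    -- the concentration-around-the-median tail bound:
    (htail : ∀ t > (0 : ℝ), (μ {ω | |X ω - m| > t}).toReal ≤
      4 * Real.exp (-t ^ 2 / (4 * c ^ 2 * r * (m + t))) + 4 * p) :
    |(∫ ω, X ω ∂μ) - m| ≤
      48 * c * Real.sqrt (r * ∫ ω, X ω ∂μ) + 64 * r * c ^ 2 + 4 * M * p := by
  obtain ⟨hp0, hp1⟩ := hp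
  have hne : ∀ s : Set Ω, (1:ℝ)/2 ≤ (μ s).toReal → s.Nonempty := by
    intro s hs
    rcases s.eq_empty_or_nonempty with h | h
    · rw [h] at hs; simp at hs; linarith
    · exact h
  obtain ⟨ω₁, hω₁⟩ := hne _ hm1
  obtain ⟨ω₂, hω₂⟩ := hne _ hm2
  have hm0 : 0 ≤ m := le_trans (h0 ω₂) hω₂
  have hmM : m ≤ M := le_trans hω₁ (hM ω₁)
  have hM0 : 0 ≤ M := le_trans hm0 hmM
  have hintX : Integrable X μ := by
    refine (integrable_const M).mono' hmeas.aestronglyMeasurable ?_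
    exact ae_of_all _ fun ω => by
      rw [Real.norm_eq_abs, abs_of_nonneg (h0 ω)]; exact hM ω
  set E := ∫ ω, X ω ∂μ with hE
  have hE0 : 0 ≤ E := integral_nonneg h0
  have hm2E : m ≤ 2 * E := by
    have h := mul_meas_ge_le_integral_of_nonneg (ae_of_all _ h0) hintX m
    have h2 : m * (1/2) ≤ m * (μ {x | m ≤ X x}).toReal :=
      mul_le_mul_of_nonneg_left hm1 hm0
    rw [← hE, measureReal_def] at h
    linarith
  have habs_le : ∀ ω, |X ω - m| ≤ M := fun ω => by
    rw [abs_le]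
    constructor
    · linarith [h0 ω, hmM]
    · linarith [hM ω, hm0]
  have habs_int : Integrable (fun ω => |X ω - m|) μ := by
    refine (integrable_const M).mono' ((hmeas.sub measurable_const).abs).aestronglyMeasurable ?_
    exact ae_of_all _ fun ω => by rw [Real.norm_eq_abs, abs_abs]; exact habs_le ω
  have step1 : |E - m| ≤ ∫ ω, |X ω - m| ∂μ := by
    have hEq : E - m = ∫ ω, (X ω - m) ∂μ := by
      rw [integral_sub hintX (integrable_const m), integral_const]; simp [hE]
    rw [hEq]
    simpa [Real.norm_eq_abs] using
      norm_integral_le_integral_norm (μ := μ) (f := fun ω => X ω - m)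
  set g : ℝ → ℝ := fun t => (μ {a | t < |X a - m|}).toReal with hgdef
  have step2 : ∫ ω, |X ω - m| ∂μ = ∫ t in Ioi (0:ℝ), g t :=
    habs_int.integral_eq_integral_meas_lt (ae_of_all _ fun ω => abs_nonneg _)
  have hg_nonneg : ∀ t, 0 ≤ g t := fun t => ENNReal.toReal_nonneg
  have hg_anti : Antitone g := by
    intro t t' htt'
    exact ENNReal.toReal_mono (measure_ne_top μ _)
      (measure_mono fun a ha => lt_of_le_of_lt htt' ha)
  have hg_zeroM : ∀ t ∈ Ioi M, g t = 0 := by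
    intro t ht
    have hempty : {a | t < |X a - m|} = (∅ : Set Ω) := by
      ext a
      simp only [mem_setOf_eq, mem_empty_iff_false, iff_false, not_lt]
      exact le_trans (habs_le a) (le_of_lt ht)
    simp [hgdef, hempty]
  set D := 4 * c ^ 2 * r with hD
  have hD0 : 0 < D := by positivity
  set f₁ : ℝ → ℝ := fun t => Real.exp (-t ^ 2 / (D * (m + t))) with hf₁def
  have hf₁_meas : Measurable f₁ := by
    apply Measurable.exp
    exact (measurable_id.pow_const 2).neg.div
      ((measurable_const.add measurable_id).const_mul D)
  have hf₁_nonneg : ∀ t, 0 ≤ f₁ t := fun t => (Real.exp_pos _).le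
  have hf₁_le_one : ∀ t : ℝ, 0 < t → f₁ t ≤ 1 := by
    intro t ht
    apply Real.exp_le_one_iff.mpr
    apply div_nonpos_of_nonpos_of_nonneg
    · simpa using sq_nonneg t
    · exact mul_nonneg hD0.le (by linarith)
  -- integrability of f₁ on bounded Ioc intervals
  have hint_Ioc : ∀ a b : ℝ, 0 ≤ a → IntegrableOn f₁ (Ioc a b) := by
    intro a b ha
    refine Integrable.mono' (g := fun _ => (1:ℝ))
      (integrableOn_const measure_Ioc_lt_top.ne)
      hf₁_meas.aestronglyMeasurable.restrict ?_
    rw [ae_restrict_iff' measurableSet_Ioc]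
    refine ae_of_all _ fun t ht => ?_
    rw [Real.norm_eq_abs, abs_of_nonneg (hf₁_nonneg t)]
    exact hf₁_le_one t (lt_of_le_of_lt ha ht.1)
  -- tail piece on Ioi m
  have hb₂ : (0:ℝ) < 1/(2*D) := by positivity
  have hpt3 : ∀ t ∈ Ioi m, f₁ t ≤ Real.exp (-((1/(2*D)) * t)) := by
    intro t ht
    simp only [mem_Ioi] at ht
    have ht0 : 0 < t := lt_of_le_of_lt hm0 ht
    apply Real.exp_le_exp.mpr
    rw [neg_div, neg_le_neg_iff]
    have h1 : (1/(2*D)) * t = t / (2*D) := by ring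
    rw [h1, div_le_div_iff₀ (by positivity) (mul_pos hD0 (by linarith))]
    have h2 : m + t ≤ 2 * t := by linarith
    calc t * (D * (m + t)) ≤ t * (D * (2 * t)) := by
          exact mul_le_mul_of_nonneg_left (mul_le_mul_of_nonneg_left h2 hD0.le) ht0.le
      _ = t ^ 2 * (2 * D) := by ring
  have hint3 : IntegrableOn f₁ (Ioi m) := by
    refine Integrable.mono' (exp_integrableOn_Ioi' hb₂ m)
      hf₁_meas.aestronglyMeasurable.restrict ?_
    rw [ae_restrict_iff' measurableSet_Ioi]
    refine ae_of_all _ fun t ht => ?_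
    rw [Real.norm_eq_abs, abs_of_nonneg (hf₁_nonneg t)]
    exact hpt3 t ht
  have hI3 : ∫ t in Ioi m, f₁ t ≤ 8 * r * c ^ 2 := by
    calc ∫ t in Ioi m, f₁ t ≤ ∫ t in Ioi m, Real.exp (-((1/(2*D)) * t)) :=
          setIntegral_mono_on hint3 (exp_integrableOn_Ioi' hb₂ m) measurableSet_Ioi hpt3
      _ ≤ 1 / (1/(2*D)) := exp_integral_Ioi_le hb₂ hm0
      _ = 8 * r * c ^ 2 := by rw [one_div_one_div, hD]; ring
  have hIoi0 : IntegrableOn f₁ (Ioi 0) := by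
    rw [← Ioc_union_Ioi_eq_Ioi hm0]
    exact (hint_Ioc 0 m le_rfl).union hint3
  -- integral of constant 1 over Ioc
  have hconst_int : ∀ a b : ℝ, a ≤ b → ∫ _ in Ioc a b, (1:ℝ) = b - a := by
    intro a b hab
    rw [setIntegral_const, Real.volume_real_Ioc_of_le hab, smul_eq_mul,
      mul_one]
  have hsmall : ∀ a b : ℝ, 0 ≤ a → a ≤ b → ∫ t in Ioc a b, f₁ t ≤ b - a := by
    intro a b ha hab
    calc ∫ t in Ioc a b, f₁ t ≤ ∫ _ in Ioc a b, (1:ℝ) :=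
          setIntegral_mono_on (hint_Ioc a b ha)
            (integrableOn_const measure_Ioc_lt_top.ne) measurableSet_Ioc
            (fun t ht => hf₁_le_one t (lt_of_le_of_lt ha ht.1))
      _ = b - a := hconst_int a b hab
  -- the key bound on ∫_{Ioi 0} f₁
  have hIkey : ∫ t in Ioi (0:ℝ), f₁ t ≤ 6 * c * Real.sqrt (r * m) + 12 * r * c ^ 2 := by
    have hsplit : ∫ t in Ioi (0:ℝ), f₁ t = (∫ t in Ioc 0 m, f₁ t) + ∫ t in Ioi m, f₁ t := by
      rw [← setIntegral_union Ioc_disjoint_Ioi_same measurableSet_Ioi (hint_Ioc 0 m le_rfl)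
        hint3, Ioc_union_Ioi_eq_Ioi hm0]
    rw [hsplit]
    have hsqnn : 0 ≤ Real.sqrt (r * m) := Real.sqrt_nonneg _
    rcases le_or_gt m (4 * c ^ 2 * r) with hcase | hcase
    · have h1 : ∫ t in Ioc (0:ℝ) m, f₁ t ≤ m := by
        simpa using hsmall 0 m le_rfl hm0
      nlinarith [mul_nonneg (mul_nonneg (by norm_num : (0:ℝ) ≤ 6) hc.le) hsqnn]
    · have hm0' : 0 < m := lt_trans (by positivity) hcase
      have hrm : 0 < r * m := by positivity
      set s := 2 * c * Real.sqrt (r * m) with hs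
      have hsqpos : 0 < Real.sqrt (r * m) := Real.sqrt_pos.mpr hrm
      have hs0 : 0 < s := by positivity
      have hsm : s ≤ m := by
        have h1 : Real.sqrt (4 * c ^ 2 * r) ≤ Real.sqrt m := Real.sqrt_le_sqrt hcase.le
        have h2 : Real.sqrt (4 * c ^ 2 * r) = 2 * c * Real.sqrt r := by
          rw [show 4 * c ^ 2 * r = (2*c) ^ 2 * r by ring, Real.sqrt_mul (by positivity),
            Real.sqrt_sq (by positivity)]
        have h3 : Real.sqrt (r * m) = Real.sqrt r * Real.sqrt m := Real.sqrt_mul hr.le m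
        have h4 : Real.sqrt m * Real.sqrt m = m := Real.mul_self_sqrt hm0'.le
        calc s = 2 * c * Real.sqrt r * Real.sqrt m := by rw [hs, h3]; ring
          _ ≤ Real.sqrt m * Real.sqrt m := by
              apply mul_le_mul_of_nonneg_right _ (Real.sqrt_nonneg m)
              rw [← h2]; exact h1
          _ = m := h4
      have hsplit2 : ∫ t in Ioc (0:ℝ) m, f₁ t
          = (∫ t in Ioc 0 s, f₁ t) + ∫ t in Ioc s m, f₁ t := by
        rw [← setIntegral_union (Ioc_disjoint_Ioc_of_le le_rfl) measurableSet_Ioc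
          (hint_Ioc 0 s le_rfl) (hint_Ioc s m hs0.le), Ioc_union_Ioc_eq_Ioc hs0.le hsm]
      have h1 : ∫ t in Ioc (0:ℝ) s, f₁ t ≤ s := by
        simpa using hsmall 0 s le_rfl hs0.le
      set b₁ := s / (2 * D * m) with hb₁def
      have hb₁ : 0 < b₁ := by positivity
      have hpt2 : ∀ t ∈ Ioc s m, f₁ t ≤ Real.exp (-(b₁ * t)) := by
        intro t ht
        obtain ⟨hts, htm⟩ := ht
        have ht0 : 0 < t := lt_trans hs0 hts
        apply Real.exp_le_exp.mpr
        rw [neg_div, neg_le_neg_iff]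
        have h1 : b₁ * t = (s * t) / (2 * D * m) := by rw [hb₁def]; ring
        rw [h1, div_le_div_iff₀ (by positivity) (mul_pos hD0 (by linarith))]
        have e1 : s * t ≤ t * t := mul_le_mul_of_nonneg_right hts.le ht0.le
        have e2 : D * (m + t) ≤ D * (2 * m) := mul_le_mul_of_nonneg_left (by linarith) hD0.le
        have key : s * t * (D * (m + t)) ≤ (t * t) * (D * (2 * m)) :=
          mul_le_mul e1 e2 (mul_nonneg hD0.le (by linarith)) (by positivity)
        exact key.trans_eq (by ring)
      have h2 : ∫ t in Ioc s m, f₁ t ≤ 4 * c * Real.sqrt (r * m) := by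
        calc ∫ t in Ioc s m, f₁ t ≤ ∫ t in Ioc s m, Real.exp (-(b₁ * t)) :=
              setIntegral_mono_on (hint_Ioc s m hs0.le)
                ((exp_integrableOn_Ioi' hb₁ s).mono_set Ioc_subset_Ioi_self)
                measurableSet_Ioc hpt2
          _ ≤ ∫ t in Ioi s, Real.exp (-(b₁ * t)) :=
              setIntegral_mono_set (exp_integrableOn_Ioi' hb₁ s)
                (ae_of_all _ fun t => (Real.exp_pos _).le)
                (HasSubset.Subset.eventuallyLE Ioc_subset_Ioi_self)
          _ ≤ 1 / b₁ := exp_integral_Ioi_le hb₁ hs0.le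
          _ = 2 * D * m / s := by rw [hb₁def, one_div_div]
          _ = 4 * c * Real.sqrt (r * m) := by
              rw [div_eq_iff (ne_of_gt hs0), hD, hs]
              nlinarith [Real.mul_self_sqrt hrm.le]
      rw [hsplit2]
      have : s = 2 * c * Real.sqrt (r * m) := hs
      linarith [hI3]
  -- integrability of g
  have hgint_IocM : IntegrableOn g (Ioc 0 M) :=
    (AntitoneOn.integrableOn_isCompact isCompact_Icc (hg_anti.antitoneOn (Icc 0 M))).mono_set
      Ioc_subset_Icc_self
  have hgint_IoiM : IntegrableOn g (Ioi M) :=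
    (integrableOn_zero).congr_fun (fun t ht => (hg_zeroM t ht).symm) measurableSet_Ioi
  have hx1 : ∫ t in Ioi (0:ℝ), g t = (∫ t in Ioc 0 M, g t) + ∫ t in Ioi M, g t := by
    rw [← setIntegral_union Ioc_disjoint_Ioi_same measurableSet_Ioi hgint_IocM hgint_IoiM,
      Ioc_union_Ioi_eq_Ioi hM0]
  have hx2 : ∫ t in Ioi M, g t = 0 := by
    rw [setIntegral_congr_fun measurableSet_Ioi (fun t ht => hg_zeroM t ht)]
    simp
  have hint_h2 : IntegrableOn (fun t => 4 * f₁ t + 4 * p) (Ioc (0:ℝ) M) :=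
    ((hint_Ioc 0 M le_rfl).const_mul 4).add
      (integrableOn_const measure_Ioc_lt_top.ne)
  have hx3 : ∫ t in Ioc (0:ℝ) M, g t ≤ ∫ t in Ioc (0:ℝ) M, (4 * f₁ t + 4 * p) := by
    apply setIntegral_mono_on hgint_IocM hint_h2 measurableSet_Ioc
    intro t ht
    exact htail t ht.1
  have hx4 : ∫ t in Ioc (0:ℝ) M, (4 * f₁ t + 4 * p)
      = 4 * (∫ t in Ioc (0:ℝ) M, f₁ t) + 4 * p * M := by
    rw [integral_add ((hint_Ioc 0 M le_rfl).const_mul 4)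
      (integrableOn_const measure_Ioc_lt_top.ne), integral_const_mul,
      setIntegral_const, Real.volume_real_Ioc_of_le hM0, sub_zero, smul_eq_mul]
    ring
  have hx5 : ∫ t in Ioc (0:ℝ) M, f₁ t ≤ ∫ t in Ioi (0:ℝ), f₁ t :=
    setIntegral_mono_set hIoi0 (ae_of_all _ fun t => hf₁_nonneg t)
      (HasSubset.Subset.eventuallyLE Ioc_subset_Ioi_self)
  have hsqrt : Real.sqrt (r * m) ≤ 2 * Real.sqrt (r * E) := by
    have h1 : Real.sqrt (r * m) ≤ Real.sqrt (4 * (r * E)) :=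
      Real.sqrt_le_sqrt (by nlinarith)
    have h2 : Real.sqrt (4 * (r * E)) = 2 * Real.sqrt (r * E) := by
      rw [show (4:ℝ) * (r * E) = 2 ^ 2 * (r * E) by ring, Real.sqrt_mul (by positivity),
        Real.sqrt_sq (by norm_num)]
    linarith
  have hfin : ∫ t in Ioi (0:ℝ), g t ≤ 4 * (6 * c * Real.sqrt (r * m) + 12 * r * c ^ 2)
      + 4 * p * M := by
    rw [hx1, hx2, add_zero]
    have := le_trans hx3 (le_of_eq hx4)
    have h45 := le_trans hx5 hIkey
    linarith
  have hsq2 : 0 ≤ Real.sqrt (r * E) := Real.sqrt_nonneg _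
  calc |E - m| ≤ ∫ ω, |X ω - m| ∂μ := step1
    _ = ∫ t in Ioi (0:ℝ), g t := step2
    _ ≤ 4 * (6 * c * Real.sqrt (r * m) + 12 * r * c ^ 2) + 4 * p * M := hfin
    _ ≤ 48 * c * Real.sqrt (r * E) + 64 * r * c ^ 2 + 4 * M * p := by
        nlinarith [mul_le_mul_of_nonneg_left hsqrt (by positivity : (0:ℝ) ≤ 24 * c)]
end
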